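/- arXiv:1207.1342 — 4 statements merged into one kernel-verified Lean document; each statement's English description precedes it below -/
import Mathlib

section
/- Let Ω ⊂ ℝⁿ be a bounded open convex set, o ∈ Ω a point such that the Euclidean ball B(o,1/n) is contained in Ω and Ω is contained in the Euclidean unit ball B(o,1), and let R > 0. Then: (1) every point x ∈ ℝⁿ whose Euclidean distance to the asymptotic ball AsB(o,R) is at most (1 − tanh R)/(2n) belongs to Ω and is at Hilbert distance at most (ln 3)/2 from AsB(o,R); (2) every point of Ω (in particular every point at any Hilbert distance K > 0 from AsB(o,R)) is at Euclidean distance at most 1 − tanh R from AsB(o,R). -/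
open Filter MeasureTheory Metric Set

noncomputable section
open scoped Classical

abbrev Euc (n : ℕ) := EuclideanSpace ℝ (Fin n)

variable {n : ℕ}

/-- Parameters `t` such that `p + t • (q - p)` lies in `Ω`. For a bounded open convex `Ω`
containing `p` and `q`, this is an open interval `(t⁻, t⁺)` with `t⁻ < 0 < 1 < t⁺`, and the
two boundary points of the chord through `p`, `q` are obtained at `sInf` and `sSup`. -/
def lineParams (Ω : Set (Euc n)) (p q : Euc n) : Set ℝ := {t : ℝ | p + t • (q - p) ∈ Ω}

/-- The Hilbert distance of `Ω`. -/
noncomputable def hilbertDist (Ω : Set (Euc n)) (p q : Euc n) : ℝ :=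
  if p = q then 0 else
    (1 / 2) * Real.log
      (((1 - sInf (lineParams Ω p q)) / (-(sInf (lineParams Ω p q)))) *
        (sSup (lineParams Ω p q) / (sSup (lineParams Ω p q) - 1)))

/-- The Hilbert metric ball `B_Ω(p, r) = {x ∈ Ω : d_Ω(p,x) ≤ r}`. -/
def hilbertBall (Ω : Set (Euc n)) (p : Euc n) (r : ℝ) : Set (Euc n) :=
  {x ∈ Ω | hilbertDist Ω p x ≤ r}

/-- The Finsler norm `F_Ω(p, v) = (1/2)(1/t⁺ + 1/t⁻)`. -/
noncomputable def finslerF (Ω : Set (Euc n)) (p v : Euc n) : ℝ :=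
  if v = 0 then 0 else
    (1 / 2) * (1 / sSup {t : ℝ | p + t • v ∈ Ω} + 1 / (-(sInf {t : ℝ | p + t • v ∈ Ω})))

/-- The Busemann volume of `A ⊆ Ω`. -/
noncomputable def busemannVol (Ω A : Set (Euc n)) : ℝ :=
  (∫⁻ p in A, volume (Metric.ball (0 : Euc n) 1) /
      volume {v : Euc n | finslerF Ω p v < 1}).toReal

/-- The volume entropy of `Ω` with basepoint `p`. -/
noncomputable def hilbertEntropy (Ω : Set (Euc n)) (p : Euc n) : ℝ :=
  liminf (fun r : ℝ => Real.log (busemannVol Ω (hilbertBall Ω p r)) / r) atTop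

/-- `N(ε, Ω)`: the smallest cardinality of a finite set of points whose convex hull is at
Hausdorff distance at most `ε` from the closure of `Ω`. -/
noncomputable def approxN (Ω : Set (Euc n)) (ε : ℝ) : ℕ :=
  sInf {N : ℕ | ∃ S : Finset (Euc n), S.card = N ∧
    Metric.hausdorffDist (convexHull ℝ (S : Set (Euc n))) (closure Ω) ≤ ε}

/-- The approximability `a(Ω) = liminf_{ε→0⁺} ln N(ε,Ω) / (−ln ε)`. -/
noncomputable def approximability (Ω : Set (Euc n)) : ℝ :=
  liminf (fun ε : ℝ => Real.log (approxN Ω ε) / (-Real.log ε)) (nhdsWithin 0 (Set.Ioi 0))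

/-- The polytopal dimension `PD(Ω) = 2 a(Ω)`. -/
noncomputable def polytopalDim (Ω : Set (Euc n)) : ℝ := 2 * approximability Ω

/-- The asymptotic ball `AsB(o, R)`: image of `Ω` under the dilation of ratio `tanh R`
centred at `o`. -/
def asymptoticBall (Ω : Set (Euc n)) (o : Euc n) (R : ℝ) : Set (Euc n) :=
  (fun x => o + Real.tanh R • (x - o)) '' Ω

/-- The critical exponent of a subset `G ⊆ Ω` with basepoint `x₀`. -/
noncomputable def critExp (Ω G : Set (Euc n)) (x₀ : Euc n) : ℝ :=
  sInf {s : ℝ | 0 < s ∧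
    Summable (fun γ : G => Real.exp (-s * hilbertDist Ω (γ : Euc n) x₀))}

end

set_option maxHeartbeats 8000000

-- auxiliary lemma A
private lemma comboA {n : ℕ} {Ω : Set (Euc n)} (hΩopen : IsOpen Ω) (hΩconv : Convex ℝ Ω)
    {o : Euc n} (hin : Metric.ball o (1 / n) ⊆ Ω)
    {w : Euc n} (hw : w ∈ closure Ω) {μ : ℝ} (hμ0 : 0 < μ) (hμ1 : μ ≤ 1)
    {z : Euc n} (hz : ‖z - ((1 - μ) • w + μ • o)‖ < μ / n) : z ∈ Ω := by
  have hμne : μ ≠ 0 := ne_of_gt hμ0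
  set p : Euc n := o + μ⁻¹ • (z - ((1 - μ) • w + μ • o)) with hp
  have hpmem : p ∈ Metric.ball o (1 / n) := by
    rw [Metric.mem_ball, dist_eq_norm]
    have h1 : p - o = μ⁻¹ • (z - ((1 - μ) • w + μ • o)) := by rw [hp]; abel
    rw [h1, norm_smul, norm_inv, Real.norm_eq_abs, abs_of_pos hμ0]
    calc μ⁻¹ * ‖z - ((1 - μ) • w + μ • o)‖ < μ⁻¹ * (μ / n) :=
          mul_lt_mul_of_pos_left hz (inv_pos.mpr hμ0)
      _ = 1 / n := by field_simp
  have hcombo : μ • p + (1 - μ) • w = z := by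
    rw [hp, smul_add, smul_smul, mul_inv_cancel₀ hμne, one_smul]
    module
  have hpint : p ∈ interior Ω := by rw [hΩopen.interior_eq]; exact hin hpmem
  have hres := hΩconv.combo_interior_closure_mem_interior (a := μ) (b := 1 - μ)
    hpint hw hμ0 (by linarith) (by ring)
  rw [hcombo, hΩopen.interior_eq] at hres
  exact hres

private lemma chord_bound {n : ℕ} {Ω : Set (Euc n)}
    {o : Euc n} (hout : Ω ⊆ Metric.ball o 1)
    {x y : Euc n} (hx : x ∈ Ω) (hy : y ∈ Ω) (hxy : x ≠ y)
    {L ρ : ℝ} (hL : 0 < L) (hρ : 0 < ρ)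
    (hQ : y + (L / ‖x - y‖) • (y - x) ∈ Ω)
    (hfwd : ∀ t : ℝ, 1 < t → t < 1 + ρ / ‖x - y‖ → y + t • (x - y) ∈ Ω)
    (h3 : (L + ‖x - y‖) * (ρ + ‖x - y‖) ≤ 3 * (L * ρ)) :
    hilbertDist Ω y x ≤ Real.log 3 / 2 := by
  set d : ℝ := ‖x - y‖ with hd
  have hd0 : 0 < d := norm_pos_iff.mpr (sub_ne_zero.mpr hxy)
  set S : Set ℝ := lineParams Ω y x with hS
  have mem0 : (0:ℝ) ∈ S := by simp [hS, lineParams, hy]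
  have mem1 : (1:ℝ) ∈ S := by simp [hS, lineParams, hx]
  have hbound : ∀ t ∈ S, |t| ≤ 2 / d := by
    intro t ht
    have h1 : y + t • (x - y) ∈ Metric.ball o 1 := hout ht
    have h2 : y ∈ Metric.ball o 1 := hout hy
    rw [Metric.mem_ball, dist_eq_norm] at h1 h2
    have h3' := norm_sub_le (y + t • (x - y) - o) (y - o)
    have he : y + t • (x - y) - o - (y - o) = t • (x - y) := by abel
    rw [he] at h3'
    rw [norm_smul, Real.norm_eq_abs] at h3'
    rw [le_div_iff₀ hd0]
    nlinarith
  have bddA : BddAbove S := ⟨2 / d, fun t ht => (le_abs_self t).trans (hbound t ht)⟩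
  have bddB : BddBelow S := ⟨-(2 / d), fun t ht => neg_le_of_abs_le (hbound t ht)⟩
  have memQ : -(L / d) ∈ S := by
    have heq : y + (-(L / d)) • (x - y) = y + (L / d) • (y - x) := by module
    show y + (-(L / d)) • (x - y) ∈ Ω
    rw [heq]; exact hQ
  have ha : sInf S ≤ -(L / d) := csInf_le bddB memQ
  have hb : 1 + ρ / d ≤ sSup S := by
    by_contra h
    push_neg at h
    have h1b : 1 ≤ sSup S := le_csSup bddA mem1
    have hρd : 0 < ρ / d := div_pos hρ hd0
    set t' : ℝ := (sSup S + (1 + ρ / d)) / 2 with ht'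
    have ht'1 : 1 < t' := by rw [ht']; linarith
    have ht'lt : t' < 1 + ρ / d := by rw [ht']; linarith
    have : t' ∈ S := hfwd t' ht'1 ht'lt
    have := le_csSup bddA this
    rw [ht'] at this; linarith
  set a : ℝ := sInf S with hadef
  set b : ℝ := sSup S with hbdef
  have hLd : 0 < L / d := div_pos hL hd0
  have hna : 0 < -a := lt_of_lt_of_le hLd (by linarith)
  have hb1 : 0 < b - 1 := by have : 0 < ρ / d := div_pos hρ hd0; linarith
  have had : a * d ≤ -L := by
    have := mul_le_mul_of_nonneg_right ha hd0.le
    rwa [neg_mul, div_mul_cancel₀ _ (ne_of_gt hd0)] at this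
  have hbd : ρ + d ≤ b * d := by
    have := mul_le_mul_of_nonneg_right hb hd0.le
    rw [add_mul, one_mul, div_mul_cancel₀ _ (ne_of_gt hd0)] at this
    linarith
  have f1 : (1 - a) / (-a) ≤ (L + d) / L := by
    rw [div_le_div_iff₀ hna hL]
    nlinarith
  have f2 : b / (b - 1) ≤ (ρ + d) / ρ := by
    rw [div_le_div_iff₀ hb1 hρ]
    nlinarith
  have hf2nn : 0 ≤ b / (b - 1) := div_nonneg (by linarith) hb1.le
  have hf1nn : 0 ≤ (L + d) / L := div_nonneg (by linarith) hL.le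
  have fprod : (1 - a) / (-a) * (b / (b - 1)) ≤ (L + d) / L * ((ρ + d) / ρ) :=
    mul_le_mul f1 f2 hf2nn hf1nn
  have hrhs : (L + d) / L * ((ρ + d) / ρ) ≤ 3 := by
    rw [div_mul_div_comm, div_le_iff₀ (by positivity)]
    nlinarith
  have hCRpos : 0 < (1 - a) / (-a) * (b / (b - 1)) :=
    mul_pos (div_pos (by linarith) hna) (div_pos (by linarith) hb1)
  have hCR3 : (1 - a) / (-a) * (b / (b - 1)) ≤ 3 := fprod.trans hrhs
  have hlog := Real.log_le_log hCRpos hCR3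
  rw [hilbertDist, if_neg (fun h => hxy h.symm)]
  rw [← hS, ← hadef, ← hbdef]
  linarith

open Filter MeasureTheory Metric Set in
/-- **Comparison of Hausdorff-Euclidean and Hausdorff-Hilbert neighbourhoods of asymptotic
balls.** Suppose `B(o,1/n) ⊆ Ω ⊆ B(o,1)`. Then (1) every point whose Euclidean distance to
`AsB(o,R)` is at most `(1 − tanh R)/(2n)` lies in `Ω` and is at Hilbert distance at most
`(ln 3)/2` from `AsB(o,R)`; (2) every point of `Ω` is at Euclidean distance at most
`1 − tanh R` from `AsB(o,R)`. -/
theorem asymptoticBall_neighbourhoods (n : ℕ) (hn : 1 ≤ n) (Ω : Set (Euc n))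
    (hΩopen : IsOpen Ω) (hΩconv : Convex ℝ Ω) (hΩbdd : Bornology.IsBounded Ω)
    (o : Euc n) (ho : o ∈ Ω)
    (hin : Metric.ball o (1 / n) ⊆ Ω) (hout : Ω ⊆ Metric.ball o 1)
    (R : ℝ) (hR : 0 < R) :
    (∀ x : Euc n,
      Metric.infDist x (asymptoticBall Ω o R) ≤ (1 - Real.tanh R) / (2 * n) →
        x ∈ Ω ∧ ∃ y ∈ asymptoticBall Ω o R, hilbertDist Ω y x ≤ Real.log 3 / 2) ∧
    (∀ x ∈ Ω, Metric.infDist x (asymptoticBall Ω o R) ≤ 1 - Real.tanh R) := by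
  have hn0 : (0:ℝ) < n := by exact_mod_cast Nat.lt_of_lt_of_le Nat.zero_lt_one hn
  have hn1 : (1:ℝ) ≤ n := by exact_mod_cast hn
  set τ : ℝ := Real.tanh R with hτdef
  have hτ0 : 0 < τ := by
    rw [hτdef, Real.tanh_eq_sinh_div_cosh]
    exact div_pos (Real.sinh_pos_iff.mpr hR) (Real.cosh_pos R)
  have hτ1 : τ < 1 := by
    rw [hτdef, Real.tanh_eq_sinh_div_cosh]
    exact (div_lt_one (Real.cosh_pos R)).mpr (Real.sinh_lt_cosh R)
  set δ : ℝ := (1 - τ) / (2 * n) with hδdef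
  have hδ0 : 0 < δ := div_pos (by linarith) (by positivity)
  set A : Set (Euc n) := asymptoticBall Ω o R with hA
  have hAo : o ∈ A := ⟨o, ho, by simp⟩
  have hAne : A.Nonempty := ⟨o, hAo⟩
  have hAsub : A ⊆ Ω := by
    rintro _ ⟨w, hw, rfl⟩
    have := hΩconv ho hw (by linarith : (0:ℝ) ≤ 1 - τ) hτ0.le (by ring)
    have heq : (1 - τ) • o + τ • w = o + τ • (w - o) := by module
    rwa [heq] at this
  -- uniform inner ball around any point of the image of the closure
  have hball : ∀ w ∈ closure Ω, ∀ z : Euc n, ‖z - (o + τ • (w - o))‖ < 2 * δ → z ∈ Ω := by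
    intro w hw z hz
    have h2δ : 2 * δ = (1 - τ) / n := by rw [hδdef]; field_simp
    refine comboA hΩopen hΩconv hin hw (μ := 1 - τ) (by linarith) (by linarith) ?_
    have heq : (1 - (1 - τ)) • w + (1 - τ) • o = o + τ • (w - o) := by module
    rw [heq]
    rw [h2δ] at hz
    exact hz
  have hballA : ∀ y ∈ A, ∀ z : Euc n, ‖z - y‖ < 2 * δ → z ∈ Ω := by
    rintro _ ⟨w, hw, rfl⟩ z hz
    exact hball w (subset_closure hw) z hz
  constructor
  · intro x hxδ
    -- x ∈ Ω
    have hxΩ : x ∈ Ω := by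
      obtain ⟨y, hyA, hxy⟩ := (Metric.infDist_lt_iff hAne).mp
        (lt_of_le_of_lt hxδ (by linarith : δ < 2 * δ))
      exact hballA y hyA x (by rwa [← dist_eq_norm])
    refine ⟨hxΩ, ?_⟩
    -- Projection machinery on the closure of A
    set C : Set (Euc n) := closure A with hC
    have hCne : C.Nonempty := hAne.closure
    have hCconv : Convex ℝ C := by
      refine Convex.closure ?_
      rintro _ ⟨w1, hw1, rfl⟩ _ ⟨w2, hw2, rfl⟩ a b ha hb hab
      obtain rfl : b = 1 - a := by linarith
      refine ⟨a • w1 + (1 - a) • w2, hΩconv hw1 hw2 ha hb hab, ?_⟩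
      show o + τ • ((a • w1 + (1 - a) • w2) - o) =
        a • (o + τ • (w1 - o)) + (1 - a) • (o + τ • (w2 - o))
      module
    obtain ⟨yb, hybC, hproj_eq⟩ := exists_norm_eq_iInf_of_complete_convex hCne
      isClosed_closure.isComplete hCconv x
    have hinfC : Metric.infDist x C = ‖x - yb‖ := by
      rw [Metric.infDist_eq_iInf, hproj_eq]
      exact iInf_congr fun w => dist_eq_norm x w
    set db : ℝ := ‖x - yb‖ with hdb
    have hdbδ : db ≤ δ := by
      have h1 : Metric.infDist x C ≤ Metric.infDist x A :=
        Metric.infDist_le_infDist_of_subset subset_closure hAne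
      rw [hinfC] at h1
      linarith
    have himg : C ⊆ (fun w : Euc n => o + τ • (w - o)) '' (closure Ω) := by
      have hcont : Continuous (fun w : Euc n => o + τ • (w - o)) :=
        continuous_const.add ((continuous_id.sub continuous_const).const_smul τ)
      have hcomp : IsCompact ((fun w : Euc n => o + τ • (w - o)) '' (closure Ω)) :=
        (Metric.isCompact_of_isClosed_isBounded isClosed_closure hΩbdd.closure).image hcont
      refine closure_minimal ?_ hcomp.isClosed
      rintro _ ⟨w, hw, rfl⟩
      exact ⟨w, subset_closure hw, rfl⟩
    obtain ⟨wb, hwb, hybeq⟩ := himg hybC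
    simp only at hybeq
    have hlog3 : 0 ≤ Real.log 3 / 2 := by
      have := Real.log_nonneg (by norm_num : (1:ℝ) ≤ 3); linarith
    by_cases hdb0 : db = 0
    · -- x is in the closure of A : pick y ∈ A very close to x
      have hxC : x ∈ C := by
        have hxyb : x = yb := by
          have h0 : x - yb = 0 := by rw [← norm_eq_zero, ← hdb]; exact hdb0
          have := sub_eq_zero.mp h0; rw [this]
        rwa [hxyb]
      obtain ⟨y, hyA, hyd⟩ := Metric.mem_closure_iff.mp hxC (δ/2) (by linarith)
      by_cases hyx : y = x
      · exact ⟨y, hyA, by rw [hilbertDist, if_pos hyx]; exact hlog3⟩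
      · set d : ℝ := ‖x - y‖ with hd
        have hdδ : d < δ/2 := by rw [hd, ← dist_eq_norm]; exact hyd
        have hxy : x ≠ y := Ne.symm hyx
        have hd0 : 0 < d := by rw [hd]; exact norm_pos_iff.mpr (sub_ne_zero.mpr hxy)
        refine ⟨y, hyA, chord_bound hout hxΩ (hAsub hyA) hxy
          (L := 2*δ - d) (ρ := 2*δ - d) (by linarith) (by linarith) ?_ ?_ ?_⟩
        · apply hballA y hyA
          have heq : y + ((2*δ - d)/d) • (y - x) - y = ((2*δ - d)/d) • (y - x) := by abel
          rw [heq, norm_smul, Real.norm_eq_abs,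
            abs_of_nonneg (div_nonneg (by linarith) hd0.le), norm_sub_rev, ← hd]
          rw [div_mul_cancel₀ _ (ne_of_gt hd0)]
          linarith
        · intro t ht1 ht2
          apply hballA y hyA
          have heq : y + t • (x - y) - y = t • (x - y) := by abel
          rw [heq, norm_smul, Real.norm_eq_abs, abs_of_nonneg (by linarith), ← hd]
          have h1 := mul_lt_mul_of_pos_right ht2 hd0
          rw [add_mul, one_mul, div_mul_cancel₀ _ (ne_of_gt hd0)] at h1
          linarith
        · nlinarith
    · -- main case : positive distance to the closure of A
      have hdb0' : 0 < db := lt_of_le_of_ne (by rw [hdb]; exact norm_nonneg _) (Ne.symm hdb0)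
      have hproj : ∀ z ∈ C, inner ℝ (x - yb) (z - yb) ≤ (0:ℝ) :=
        (norm_eq_iInf_iff_real_inner_le_zero hCconv hybC).mp hproj_eq
      -- the closed ball of radius τ/n about o is contained in C
      have hballsub : Metric.ball o (τ/n) ⊆ A := by
        intro z hz
        rw [Metric.mem_ball, dist_eq_norm] at hz
        refine ⟨o + τ⁻¹ • (z - o), hin ?_, ?_⟩
        · rw [Metric.mem_ball, dist_eq_norm]
          have heq : o + τ⁻¹ • (z - o) - o = τ⁻¹ • (z - o) := by abel
          rw [heq, norm_smul, Real.norm_eq_abs, abs_of_pos (inv_pos.mpr hτ0)]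
          calc τ⁻¹ * ‖z - o‖ < τ⁻¹ * (τ/n) := mul_lt_mul_of_pos_left hz (inv_pos.mpr hτ0)
            _ = 1/n := by field_simp
        · show o + τ • (o + τ⁻¹ • (z - o) - o) = z
          have heq : o + τ⁻¹ • (z - o) - o = τ⁻¹ • (z - o) := by abel
          rw [heq, smul_smul, mul_inv_cancel₀ (ne_of_gt hτ0), one_smul]
          abel
      have hcb : Metric.closedBall o (τ/n) ⊆ C := by
        rw [hC, ← closure_ball o (ne_of_gt (by positivity : (0:ℝ) < τ/n))]
        exact closure_mono hballsub
      -- inner product estimate coming from the projection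
      have hio : inner ℝ (x - yb) (o - yb) ≤ -(τ/n) * db := by
        have hz0C : o + ((τ/n)/db) • (x - yb) ∈ C := hcb (by
          rw [Metric.mem_closedBall, dist_eq_norm]
          have heq : o + ((τ/n)/db) • (x - yb) - o = ((τ/n)/db) • (x - yb) := by abel
          rw [heq, norm_smul, Real.norm_eq_abs, abs_of_nonneg (by positivity), ← hdb]
          rw [div_mul_cancel₀ _ (ne_of_gt hdb0')])
        have h1 := hproj _ hz0C
        have h2 : o + ((τ/n)/db) • (x - yb) - yb = (o - yb) + ((τ/n)/db) • (x - yb) := by abel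
        rw [h2, inner_add_right, real_inner_smul_right, real_inner_self_eq_norm_sq, ← hdb] at h1
        have h3 : (τ/n)/db * db^2 = τ/n * db := by field_simp
        nlinarith [h1]
      have hiw : db / n ≤ inner ℝ (x - yb) (wb - o) := by
        have h4 : (yb - o : Euc n) = τ • (wb - o) := by rw [← hybeq]; abel
        have h5 : inner ℝ (x - yb) (yb - o) = τ * inner ℝ (x - yb) (wb - o) := by
          rw [h4, real_inner_smul_right]
        have h6 : (yb - o : Euc n) = -(o - yb) := by abel
        rw [h6, inner_neg_right] at h5
        have h7 : τ/n * db ≤ τ * inner ℝ (x - yb) (wb - o) := by rw [← h5]; linarith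
        have h8 : τ * (db/n) ≤ τ * inner ℝ (x - yb) (wb - o) := by
          have : τ/n * db = τ * (db/n) := by ring
          linarith [this ▸ h7]
        have := le_of_mul_le_mul_left h8 hτ0
        linarith
      -- constants
      set κ : ℝ := min τ (2*δ/n) with hκdef
      have hκ0 : 0 < κ := lt_min hτ0 (by positivity)
      have hκτ : κ ≤ τ := min_le_left _ _
      have hκδ : κ ≤ 2*δ/n := min_le_right _ _
      have ht0a : κ/n ≤ 2*δ := by
        calc κ/n ≤ κ := div_le_self hκ0.le hn1
          _ ≤ 2*δ/n := hκδ
          _ ≤ 2*δ := div_le_self (by linarith) hn1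
      set L : ℝ := 2*δ + κ/n with hLdef
      have hL0 : 0 < L := by positivity
      have hL2δ : 2*δ ≤ L := le_add_of_nonneg_right (by positivity)
      set M : ℝ := 2*δ*κ/n with hMdef
      have hM0 : 0 < M := by positivity
      set ε1 : ℝ := M/(2*L) with hε1def
      have hε10 : 0 < ε1 := by positivity
      have hε1L : ε1 ≤ L := by
        rw [hε1def, div_le_iff₀ (by positivity)]
        have hMle : M ≤ 4*δ^2 := by
          rw [hMdef]
          have : 2*δ*(κ/n) ≤ 2*δ*(2*δ) := by
            apply mul_le_mul_of_nonneg_left ht0a (by linarith)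
          calc 2*δ*κ/n = 2*δ*(κ/n) := by ring
            _ ≤ 2*δ*(2*δ) := this
            _ = 4*δ^2 := by ring
        nlinarith
      -- the perturbed backward point lies in Ω
      have hP : ∀ e : Euc n, ‖e‖ < ε1 → (yb - (L/db) • (x - yb)) + e ∈ Ω := by
        intro e he
        refine comboA hΩopen hΩconv hin hwb (μ := (1 - τ) + κ)
          (by linarith) (by linarith) ?_
        have hzc : (yb - (L/db) • (x - yb)) + e - ((1 - ((1 - τ) + κ)) • wb + ((1 - τ) + κ) • o)
            = (κ • (wb - o) - (L/db) • (x - yb)) + e := by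
          rw [← hybeq]; module
        rw [hzc]
        have hμn : ((1 - τ) + κ)/n = L := by
          rw [hLdef, hδdef]; field_simp
        rw [hμn]
        have hwo : ‖wb - o‖ ≤ 1 := by
          have h9 : wb ∈ closure (Metric.ball o 1) := closure_mono hout hwb
          rw [closure_ball o one_ne_zero, Metric.mem_closedBall, dist_eq_norm] at h9
          exact h9
        have hv : ‖κ • (wb - o) - (L/db) • (x - yb)‖^2 ≤ κ^2 - 2*(κ*L/↑n) + L^2 := by
          rw [norm_sub_sq_real, real_inner_smul_left, real_inner_smul_right]
          have hw1 : ‖κ • (wb - o)‖ = κ * ‖wb - o‖ := by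
            rw [norm_smul, Real.norm_eq_abs, abs_of_pos hκ0]
          have hw2 : ‖(L/db) • (x - yb)‖ = L := by
            rw [norm_smul, Real.norm_eq_abs, abs_of_pos (by positivity), ← hdb]
            rw [div_mul_cancel₀ _ (ne_of_gt hdb0')]
          rw [hw1, hw2]
          set I : ℝ := (inner ℝ (wb - o) (x - yb) : ℝ) with hI
          have hiw2 : db/n ≤ I := by rw [hI, real_inner_comm]; exact hiw
          have hmul : κ*L*(db/↑n) ≤ κ*L*I :=
            mul_le_mul_of_nonneg_left hiw2 (by positivity)
          have hcross3 : κ * L/↑n ≤ κ * (L/db * I) := by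
            have he1 : κ * (L/db * I) = κ*L*I/db := by ring
            have he2 : κ * L/↑n = κ*L*(db/↑n)/db := by
              field_simp
            rw [he1, he2]
            gcongr
          have hsq : (κ * ‖wb - o‖)^2 ≤ κ^2 := by
            have h10 : κ * ‖wb - o‖ ≤ κ := by
              nlinarith [norm_nonneg (wb - o)]
            nlinarith [norm_nonneg (wb - o), mul_nonneg hκ0.le (norm_nonneg (wb - o))]
          linarith [hcross3, hsq]
        have hvL : ‖κ • (wb - o) - (L/db) • (x - yb)‖ ≤ L - ε1 := by
          have hε1M : 2*ε1*L = M := by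
            rw [hε1def]; field_simp
          have h10 : κ^2 + M ≤ 2*(κ*L/↑n) := by
            rw [hMdef, hLdef]
            have hk2 : κ*κ ≤ 2*δ/n*κ := mul_le_mul_of_nonneg_right hκδ hκ0.le
            have hnn : (0:ℝ) < (n:ℝ)⁻¹ := by positivity
            have hrw : 2*(κ*(2*δ + κ/↑n)/↑n) = 4*δ*κ*(n:ℝ)⁻¹ + 2*κ^2*((n:ℝ)⁻¹)^2 := by
              field_simp; ring
            rw [hrw]
            have hrw2 : 2*δ*κ/n = 2*δ*κ*(n:ℝ)⁻¹ := by ring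
            rw [hrw2]
            have hk2' : κ^2 ≤ 2*δ*κ*(n:ℝ)⁻¹ := by
              have : 2*δ/n*κ = 2*δ*κ*(n:ℝ)⁻¹ := by ring
              nlinarith [hk2]
            nlinarith [sq_nonneg κ, sq_nonneg ((n:ℝ)⁻¹), mul_pos hκ0 hκ0]
          have h11 : κ^2 - 2*(κ*L/↑n) + L^2 ≤ (L - ε1)^2 := by
            have : (L - ε1)^2 = L^2 - 2*ε1*L + ε1^2 := by ring
            rw [this, hε1M]
            nlinarith [sq_nonneg ε1]
          have hfin : ‖κ • (wb - o) - (L/db) • (x - yb)‖^2 ≤ (L - ε1)^2 := hv.trans h11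
          exact (pow_le_pow_iff_left₀ (norm_nonneg _) (by linarith) two_ne_zero).mp hfin
        calc ‖(κ • (wb - o) - (L/db) • (x - yb)) + e‖
            ≤ ‖κ • (wb - o) - (L/db) • (x - yb)‖ + ‖e‖ := norm_add_le _ _
          _ < L := by linarith
      -- choose y ∈ A close to yb
      set ε2 : ℝ := min (db/2) (min (κ/(10*n)) (ε1 * db / (2*(db + 2*L)))) with hε2def
      have hε20 : 0 < ε2 := lt_min (by positivity) (lt_min (by positivity) (by positivity))
      obtain ⟨y, hyA, hyd⟩ := Metric.mem_closure_iff.mp hybC ε2 hε20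
      have hyb : ‖y - yb‖ < ε2 := by rw [norm_sub_rev, ← dist_eq_norm]; exact hyd
      set d : ℝ := ‖x - y‖ with hd
      have hdd : |d - db| ≤ ‖y - yb‖ := by
        have h12 := abs_norm_sub_norm_le (x - y) (x - yb)
        have he : (x - y) - (x - yb) = yb - y := by abel
        rw [he, ← hd, ← hdb, norm_sub_rev] at h12
        exact h12
      have hdlow : db - ε2 ≤ d := by have := abs_le.mp hdd; linarith
      have hdhigh : d ≤ db + ε2 := by have := abs_le.mp hdd; linarith
      have hε2db : ε2 ≤ db/2 := min_le_left _ _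
      have hε2t : ε2 ≤ κ/(10*n) := (min_le_right _ _).trans (min_le_left _ _)
      have hε2e : ε2 ≤ ε1 * db / (2*(db + 2*L)) := (min_le_right _ _).trans (min_le_right _ _)
      have hd0 : 0 < d := by linarith
      have hxy : x ≠ y := by
        intro h
        have hz : d = 0 := by rw [hd, h, sub_self, norm_zero]
        linarith
      -- backward point along the chord through y and x lies in Ω
      have hQ : y + (L/d) • (y - x) ∈ Ω := by
        have hQP : y + (L/d) • (y - x) = (yb - (L/db) • (x - yb)) +
            ((y - yb) + ((L/db) • (y - yb) + (L/db - L/d) • (x - y))) := by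
          module
        rw [hQP]
        apply hP
        have n1 : ‖(L/db) • (y - yb)‖ ≤ (L/db) * ε2 := by
          rw [norm_smul, Real.norm_eq_abs, abs_of_pos (by positivity)]
          exact mul_le_mul_of_nonneg_left hyb.le (by positivity)
        have n2 : ‖(L/db - L/d) • (x - y)‖ ≤ L/db * ε2 := by
          rw [norm_smul, Real.norm_eq_abs, ← hd]
          have h11 : L/db - L/d = L*(d - db)/(db*d) := by field_simp
          rw [h11, abs_div, abs_mul, abs_of_pos hL0, abs_of_pos (mul_pos hdb0' hd0)]
          have h12 : L*|d - db|/(db*d)*d = L*|d - db|/db := by field_simp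
          rw [h12]
          have h13 : |d - db| ≤ ε2 := hdd.trans hyb.le
          calc L*|d - db|/db ≤ L*ε2/db := by gcongr
            _ = L/db * ε2 := by ring
        have n3 : ‖(y - yb) + ((L/db) • (y - yb) + (L/db - L/d) • (x - y))‖
            ≤ ε2 + (L/db * ε2 + L/db * ε2) := by
          calc ‖(y - yb) + ((L/db) • (y - yb) + (L/db - L/d) • (x - y))‖
              ≤ ‖y - yb‖ + ‖(L/db) • (y - yb) + (L/db - L/d) • (x - y)‖ := norm_add_le _ _
            _ ≤ ‖y - yb‖ + (‖(L/db) • (y - yb)‖ + ‖(L/db - L/d) • (x - y)‖) := by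
                linarith [norm_add_le ((L/db) • (y - yb)) ((L/db - L/d) • (x - y))]
            _ ≤ ε2 + (L/db * ε2 + L/db * ε2) := by linarith [hyb.le]
        have h15 : ε2 * (2*(db + 2*L)) ≤ ε1 * db := (le_div_iff₀ (by positivity)).mp hε2e
        have h16 : ε2 + (L/db * ε2 + L/db * ε2) < ε1 := by
          have h17 : ε2 + (L/db * ε2 + L/db * ε2) = ε2 * (db + 2*L)/db := by
            field_simp; ring
          rw [h17]
          rw [div_lt_iff₀ hdb0']
          nlinarith
        linarith [n3, h16]
      -- forward cone condition
      have hρ0 : 0 < 2*δ - db := by linarith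
      have hfwd : ∀ t : ℝ, 1 < t → t < 1 + (2*δ - db)/d → y + t • (x - y) ∈ Ω := by
        intro t ht1 ht2
        have h16 : y + t • (x - y) - yb = (t - 1) • (x - y) + (x - yb) := by module
        apply hball wb hwb
        rw [hybeq, h16]
        calc ‖(t - 1) • (x - y) + (x - yb)‖ ≤ ‖(t - 1) • (x - y)‖ + ‖x - yb‖ :=
              norm_add_le _ _
          _ = (t - 1)*d + db := by
              rw [norm_smul, Real.norm_eq_abs, abs_of_pos (by linarith), ← hd, ← hdb]
          _ < 2*δ := by
              have h18 := mul_lt_mul_of_pos_right (by linarith : t - 1 < (2*δ - db)/d) hd0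
              rw [div_mul_cancel₀ _ (ne_of_gt hd0)] at h18
              linarith
      -- apply the chord bound
      have ht00 : 0 < κ/n := by positivity
      refine ⟨y, hyA, chord_bound hout hxΩ (hAsub hyA) hxy
        (L := L) (ρ := 2*δ - db) hL0 hρ0 hQ hfwd ?_⟩
      rw [← hd, hLdef]
      have hdub : d ≤ db + (κ/n)/10 := by
        have : ε2 ≤ (κ/n)/10 := by
          calc ε2 ≤ κ/(10*n) := hε2t
            _ = (κ/n)/10 := by ring
        linarith
      nlinarith [mul_nonneg (sub_nonneg.mpr hdbδ) hδ0.le,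
        mul_nonneg (sub_nonneg.mpr hdbδ) ht00.le,
        mul_nonneg (sub_nonneg.mpr ht0a) ht00.le,
        mul_pos hδ0 ht00, mul_pos hdb0' hd0, mul_pos hδ0 hdb0',
        mul_le_mul (by linarith : 2*δ + κ/n + d ≤ 2*δ + κ/n + (db + (κ/n)/10))
          (by linarith : 2*δ - db + d ≤ 2*δ - db + (db + (κ/n)/10))
          (by linarith) (by positivity)]
  · intro x hxΩ
    have hmem : o + τ • (x - o) ∈ A := ⟨x, hxΩ, rfl⟩
    have hxo : ‖x - o‖ < 1 := by
      have := hout hxΩ; rwa [Metric.mem_ball, dist_eq_norm] at this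
    calc Metric.infDist x (asymptoticBall Ω o R) ≤ dist x (o + τ • (x - o)) :=
          Metric.infDist_le_dist_of_mem hmem
      _ = (1 - τ) * ‖x - o‖ := by
          rw [dist_eq_norm]
          have heq : x - (o + τ • (x - o)) = (1 - τ) • (x - o) := by module
          rw [heq, norm_smul, Real.norm_eq_abs, abs_of_nonneg (by linarith)]
      _ ≤ 1 - τ := by nlinarith
end

section
/- Let Ω ⊂ ℝⁿ be a bounded open convex set, o ∈ Ω a point such that the Euclidean ball B(o,1/n) is contained in Ω and Ω is contained in the Euclidean unit ball B(o,1). Then for every R > 0 one has B_Ω(o,R) ⊂ AsB(o, R + ln 2) and AsB(o,R) ⊂ B_Ω(o, R + ln(n+1)); moreover the first inclusion B_Ω(o,R) ⊂ AsB(o, R + ln 2) holds for any bounded open convex set Ω and any o ∈ Ω. -/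
open Filter MeasureTheory Metric Set

section Aux
open Metric Set
variable {n : ℕ} {Ω : Set (Euc n)} {o x : Euc n}

lemma lp_convex (hc : Convex ℝ Ω) (o x : Euc n) : Convex ℝ (lineParams Ω o x) := by
  intro s hs t ht a b ha hb hab
  show o + (a • s + b • t) • (x - o) ∈ Ω
  have key : o + (a • s + b • t) • (x - o)
      = a • (o + s • (x - o)) + b • (o + t • (x - o)) := by
    have hb' : b = 1 - a := by linarith
    subst hb'
    simp only [smul_eq_mul]
    module
  rw [key]
  exact hc hs ht ha hb hab

lemma lp_isOpen (hΩ : IsOpen Ω) (o x : Euc n) : IsOpen (lineParams Ω o x) := by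
  have : lineParams Ω o x = (fun t : ℝ => o + t • (x - o)) ⁻¹' Ω := rfl
  rw [this]
  exact hΩ.preimage (continuous_const.add (continuous_id.smul continuous_const))

lemma lp_zero_mem (ho : o ∈ Ω) : (0:ℝ) ∈ lineParams Ω o x := by
  show o + (0:ℝ) • (x - o) ∈ Ω
  simpa using ho

lemma lp_one_mem (hx : x ∈ Ω) : (1:ℝ) ∈ lineParams Ω o x := by
  show o + (1:ℝ) • (x - o) ∈ Ω
  simpa using hx

lemma lp_abs_le (hb : Bornology.IsBounded Ω) (hxo : x ≠ o) :
    ∃ C : ℝ, ∀ t ∈ lineParams Ω o x, |t| ≤ C := by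
  obtain ⟨C, hC⟩ := hb.subset_closedBall o
  have hx : 0 < ‖x - o‖ := norm_pos_iff.mpr (sub_ne_zero.mpr hxo)
  refine ⟨C / ‖x - o‖, fun t ht => ?_⟩
  have h1 := hC ht
  rw [mem_closedBall, dist_eq_norm] at h1
  have h2 : ‖o + t • (x - o) - o‖ = |t| * ‖x - o‖ := by
    simp [norm_smul, Real.norm_eq_abs]
  rw [h2] at h1
  rw [le_div_iff₀ hx]
  exact h1

lemma lp_bddAbove (hb : Bornology.IsBounded Ω) (hxo : x ≠ o) :
    BddAbove (lineParams Ω o x) := by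
  obtain ⟨C, hC⟩ := lp_abs_le hb hxo
  exact ⟨C, fun t ht => (abs_le.mp (hC t ht)).2⟩

lemma lp_bddBelow (hb : Bornology.IsBounded Ω) (hxo : x ≠ o) :
    BddBelow (lineParams Ω o x) := by
  obtain ⟨C, hC⟩ := lp_abs_le hb hxo
  exact ⟨-C, fun t ht => (abs_le.mp (hC t ht)).1⟩

lemma lp_sInf_neg (hΩ : IsOpen Ω) (hb : Bornology.IsBounded Ω) (ho : o ∈ Ω) (hxo : x ≠ o) :
    sInf (lineParams Ω o x) < 0 := by
  have h0 : (0:ℝ) ∈ lineParams Ω o x := lp_zero_mem ho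
  obtain ⟨ε, hε, hball⟩ := Metric.isOpen_iff.mp (lp_isOpen hΩ o x) 0 h0
  have hmem : -(ε/2) ∈ lineParams Ω o x := by
    apply hball
    simp only [Metric.mem_ball, Real.dist_eq, sub_zero]
    rw [abs_of_nonpos (by linarith)]
    linarith
  calc sInf (lineParams Ω o x) ≤ -(ε/2) := csInf_le (lp_bddBelow hb hxo) hmem
    _ < 0 := by linarith

lemma lp_one_lt_sSup (hΩ : IsOpen Ω) (hb : Bornology.IsBounded Ω) (hx : x ∈ Ω) (hxo : x ≠ o) :
    1 < sSup (lineParams Ω o x) := by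
  have h1 : (1:ℝ) ∈ lineParams Ω o x := lp_one_mem hx
  obtain ⟨ε, hε, hball⟩ := Metric.isOpen_iff.mp (lp_isOpen hΩ o x) 1 h1
  have hmem : 1 + ε/2 ∈ lineParams Ω o x := by
    apply hball
    simp only [Metric.mem_ball, Real.dist_eq, add_sub_cancel_left]
    rw [abs_of_nonneg (by linarith)]
    linarith
  calc (1:ℝ) < 1 + ε/2 := by linarith
    _ ≤ sSup (lineParams Ω o x) := le_csSup (lp_bddAbove hb hxo) hmem

lemma lp_mem_of_between (hc : Convex ℝ Ω) (ho : o ∈ Ω) (hb : Bornology.IsBounded Ω)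
    (hxo : x ≠ o) {t : ℝ} (h1 : sInf (lineParams Ω o x) < t)
    (h2 : t < sSup (lineParams Ω o x)) : t ∈ lineParams Ω o x := by
  have hne : (lineParams Ω o x).Nonempty := ⟨0, lp_zero_mem ho⟩
  obtain ⟨a, ha, hta⟩ := exists_lt_of_lt_csSup hne h2
  obtain ⟨b, hbm, hbt⟩ := exists_lt_of_csInf_lt hne h1
  exact (lp_convex hc o x).ordConnected.out hbm ha ⟨hbt.le, hta.le⟩

lemma tanh_exp_formula (x : ℝ) :
    Real.tanh x = (Real.exp (2*x) - 1) / (Real.exp (2*x) + 1) := by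
  rw [Real.tanh_eq_sinh_div_cosh, Real.sinh_eq, Real.cosh_eq]
  have h1 : Real.exp (2*x) = Real.exp x * Real.exp x := by
    rw [← Real.exp_add]; ring_nf
  have h2 : Real.exp (-x) = (Real.exp x)⁻¹ := Real.exp_neg x
  have h3 : Real.exp x ≠ 0 := (Real.exp_pos x).ne'
  have h4 : Real.exp x * Real.exp x + 1 ≠ 0 := by positivity
  rw [h1, h2]
  field_simp

lemma hd_self (Ω : Set (Euc n)) (p : Euc n) : hilbertDist Ω p p = 0 := if_pos rfl

end Aux

set_option maxHeartbeats 1000000 in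
open Filter MeasureTheory Metric Set in
/-- **Metric balls vs asymptotic balls.** For any bounded open convex `Ω` and `o ∈ Ω`,
`B_Ω(o,R) ⊆ AsB(o, R + ln 2)`; if moreover `B(o,1/n) ⊆ Ω ⊆ B(o,1)` then also
`AsB(o,R) ⊆ B_Ω(o, R + ln(n+1))`. -/
theorem hilbertBall_asymptoticBall_inclusions (n : ℕ) (hn : 1 ≤ n) (Ω : Set (Euc n))
    (hΩopen : IsOpen Ω) (hΩconv : Convex ℝ Ω) (hΩbdd : Bornology.IsBounded Ω)
    (o : Euc n) (ho : o ∈ Ω) (R : ℝ) (hR : 0 < R) :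
    hilbertBall Ω o R ⊆ asymptoticBall Ω o (R + Real.log 2) ∧
    (Metric.ball o (1 / n) ⊆ Ω → Ω ⊆ Metric.ball o 1 →
      asymptoticBall Ω o R ⊆ hilbertBall Ω o (R + Real.log (n + 1))) := by
  have hE1 : 1 < Real.exp (2*R) := Real.one_lt_exp_iff.mpr (by linarith)
  set E := Real.exp (2*R) with hEdef
  constructor
  · -- Part 1
    intro x hx
    obtain ⟨hxΩ, hd⟩ := hx
    by_cases hxo : x = o
    · exact ⟨o, ho, by simp [hxo]⟩
    have hi : sInf (lineParams Ω o x) < 0 := lp_sInf_neg hΩopen hΩbdd ho hxo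
    have hs1 : 1 < sSup (lineParams Ω o x) := lp_one_lt_sSup hΩopen hΩbdd hxΩ hxo
    obtain ⟨i, hidef⟩ : ∃ i, sInf (lineParams Ω o x) = i := ⟨_, rfl⟩
    obtain ⟨s, hsdef⟩ : ∃ s, sSup (lineParams Ω o x) = s := ⟨_, rfl⟩
    rw [hidef] at hi
    rw [hsdef] at hs1
    have hoxne : ¬ (o = x) := fun h => hxo h.symm
    simp only [hilbertDist, if_neg hoxne] at hd
    rw [hidef, hsdef] at hd
    have hXpos : 0 < (1 - i)/(-i) := div_pos (by linarith) (by linarith)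
    have hYpos : 0 < s/(s-1) := div_pos (by linarith) (by linarith)
    have hlog : Real.log (((1 - i)/(-i)) * (s/(s-1))) ≤ 2*R := by linarith
    have hXY : ((1 - i)/(-i)) * (s/(s-1)) ≤ E := by
      rw [hEdef]
      exact (Real.log_le_iff_le_exp (mul_pos hXpos hYpos)).mp hlog
    have hX1 : 1 ≤ (1 - i)/(-i) := by
      rw [le_div_iff₀ (by linarith : (0:ℝ) < -i)]; linarith
    have hYE : s/(s-1) ≤ E :=
      le_trans (le_mul_of_one_le_left hYpos.le hX1) hXY
    rw [div_le_iff₀ (by linarith : (0:ℝ) < s - 1)] at hYE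
    have hs_lb : E/(E-1) ≤ s := by
      rw [div_le_iff₀ (by linarith : (0:ℝ) < E - 1)]; nlinarith
    set τ := Real.tanh (R + Real.log 2) with hτdef
    have hexp : Real.exp (2*(R + Real.log 2)) = E*(2*2) := by
      rw [show 2*(R + Real.log 2) = 2*R + (Real.log 2 + Real.log 2) by ring,
        Real.exp_add, Real.exp_add, Real.exp_log two_pos, ← hEdef]
    have hτval : τ = (4*E - 1)/(4*E + 1) := by
      rw [hτdef, tanh_exp_formula, hexp]; ring_nf
    have hτpos : 0 < τ := by
      rw [hτval]; apply div_pos <;> linarith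
    have hτinv : τ⁻¹ = (4*E + 1)/(4*E - 1) := by rw [hτval, inv_div]
    have hτinvpos : 0 < τ⁻¹ := inv_pos.mpr hτpos
    have hτinv_lt : τ⁻¹ < s := by
      have h1 : (4*E + 1)/(4*E - 1) < E/(E-1) := by
        rw [div_lt_div_iff₀ (by linarith) (by linarith)]; nlinarith
      rw [hτinv]; linarith
    have hmem : τ⁻¹ ∈ lineParams Ω o x := by
      apply lp_mem_of_between hΩconv ho hΩbdd hxo
      · rw [hidef]; linarith
      · rw [hsdef]; exact hτinv_lt
    refine ⟨o + τ⁻¹ • (x - o), hmem, ?_⟩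
    show o + τ • (o + τ⁻¹ • (x - o) - o) = x
    rw [add_sub_cancel_left, smul_smul, mul_inv_cancel₀ hτpos.ne', one_smul]
    abel
  · -- Part 2
    intro hsub1 hsub2 x hx
    obtain ⟨y, hy, hxy⟩ := hx
    set τ := Real.tanh R with hτdef
    replace hxy : o + τ • (y - o) = x := hxy
    have hτval : τ = (E - 1)/(E + 1) := by
      rw [hτdef, tanh_exp_formula, ← hEdef]
    have hτpos : 0 < τ := by rw [hτval]; apply div_pos <;> linarith
    have hτ1 : τ < 1 := by rw [hτval, div_lt_one (by linarith)]; linarith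
    have hxΩ : x ∈ Ω := by
      rw [← hxy]
      have hcomb := hΩconv ho hy (by linarith : (0:ℝ) ≤ 1 - τ) hτpos.le (by ring)
      have heq : o + τ • (y - o) = (1 - τ) • o + τ • y := by module
      rw [heq]; exact hcomb
    refine ⟨hxΩ, ?_⟩
    have hlogn : (0:ℝ) ≤ Real.log ((n:ℝ) + 1) := by
      apply Real.log_nonneg
      have : (1:ℝ) ≤ (n:ℝ) := by exact_mod_cast hn
      linarith
    by_cases hxo : x = o
    · rw [hxo, hd_self]
      linarith
    have hoxne : ¬ (o = x) := fun h => hxo h.symm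
    have hn1 : (1:ℝ) ≤ (n:ℝ) := by exact_mod_cast hn
    have hi : sInf (lineParams Ω o x) < 0 := lp_sInf_neg hΩopen hΩbdd ho hxo
    have hs1 : 1 < sSup (lineParams Ω o x) := lp_one_lt_sSup hΩopen hΩbdd hxΩ hxo
    obtain ⟨i, hidef⟩ : ∃ i, sInf (lineParams Ω o x) = i := ⟨_, rfl⟩
    obtain ⟨s, hsdef⟩ : ∃ s, sSup (lineParams Ω o x) = s := ⟨_, rfl⟩
    rw [hidef] at hi
    rw [hsdef] at hs1
    have hr : 0 < ‖x - o‖ := norm_pos_iff.mpr (sub_ne_zero.mpr hxo)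
    have hyo1 : ‖y - o‖ < 1 := by
      have := hsub2 hy; rwa [mem_ball, dist_eq_norm] at this
    have hrτ : ‖x - o‖ ≤ τ := by
      rw [← hxy, add_sub_cancel_left, norm_smul, Real.norm_eq_abs,
        abs_of_pos hτpos]
      nlinarith
    have hs_lb : τ⁻¹ ≤ s := by
      have hyeq : o + τ⁻¹ • (x - o) = y := by
        rw [← hxy, add_sub_cancel_left, smul_smul, inv_mul_cancel₀ hτpos.ne',
          one_smul]
        abel
      have hmem : τ⁻¹ ∈ lineParams Ω o x := by
        show o + τ⁻¹ • (x - o) ∈ Ω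
        rw [hyeq]; exact hy
      rw [← hsdef]
      exact le_csSup (lp_bddAbove hΩbdd hxo) hmem
    have hn0 : (0:ℝ) < (n:ℝ) := by linarith
    have hnr : (0:ℝ) < (n:ℝ)*‖x - o‖ := mul_pos hn0 hr
    have hi_le : i ≤ -(1/((n:ℝ)*‖x - o‖)) := by
      by_contra hcon
      push_neg at hcon
      have hinvpos : 0 < 1/((n:ℝ)*‖x - o‖) := by positivity
      obtain ⟨c, hc1, hc2, hc0⟩ :
          ∃ c : ℝ, -i < c ∧ c < 1/((n:ℝ)*‖x - o‖) ∧ 0 < c :=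
        ⟨(-i + 1/((n:ℝ)*‖x - o‖))/2, by linarith, by linarith, by linarith⟩
      have hmem : -c ∈ lineParams Ω o x := by
        show o + (-c) • (x - o) ∈ Ω
        apply hsub1
        rw [mem_ball, dist_eq_norm, add_sub_cancel_left, norm_smul,
          Real.norm_eq_abs, abs_of_neg (by linarith : -c < 0), neg_neg]
        have hkey : (1/((n:ℝ)*‖x - o‖))*‖x - o‖ = 1/(n:ℝ) := by
          rw [one_div, mul_inv, mul_assoc, inv_mul_cancel₀ hr.ne', mul_one, one_div]
        calc c * ‖x - o‖ < (1/((n:ℝ)*‖x - o‖))*‖x - o‖ := mul_lt_mul_of_pos_right hc2 hr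
          _ = 1/(n:ℝ) := hkey
      have hle : i ≤ -c := by
        rw [← hidef]
        exact csInf_le (lp_bddBelow hΩbdd hxo) hmem
      linarith
    simp only [hilbertDist, if_neg hoxne]
    rw [hidef, hsdef]
    have hipos : 0 < -i := by linarith
    have hnri : 1 ≤ ((n:ℝ)*‖x - o‖)*(-i) := by
      have h1 : 1/((n:ℝ)*‖x - o‖) ≤ -i := by linarith
      calc (1:ℝ) = ((n:ℝ)*‖x - o‖)*(1/((n:ℝ)*‖x - o‖)) :=
            (mul_one_div_cancel hnr.ne').symm
        _ ≤ ((n:ℝ)*‖x - o‖)*(-i) := mul_le_mul_of_nonneg_left h1 hnr.le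
    have hX : (1 - i)/(-i) ≤ 1 + (n:ℝ)*τ := by
      rw [div_le_iff₀ hipos]
      nlinarith [mul_nonneg (mul_nonneg hn0.le hipos.le) (sub_nonneg.mpr hrτ)]
    have hτs : 1 ≤ τ * s := by
      calc (1:ℝ) = τ * τ⁻¹ := (mul_inv_cancel₀ hτpos.ne').symm
        _ ≤ τ * s := mul_le_mul_of_nonneg_left hs_lb hτpos.le
    have h1τ : 0 < 1 - τ := by linarith
    have hY : s/(s-1) ≤ 1/(1-τ) := by
      rw [div_le_div_iff₀ (by linarith : (0:ℝ) < s - 1) h1τ]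
      nlinarith
    have hXpos : 0 < (1 - i)/(-i) := div_pos (by linarith) hipos
    have hYpos : 0 < s/(s-1) := div_pos (by linarith) (by linarith)
    have h1nτ : (0:ℝ) ≤ 1 + (n:ℝ)*τ := by
      nlinarith [mul_nonneg hn0.le hτpos.le]
    have hXYle : ((1 - i)/(-i)) * (s/(s-1)) ≤ (1 + (n:ℝ)*τ)*(1/(1-τ)) :=
      mul_le_mul hX hY hYpos.le h1nτ
    have hEτ : τ*(E+1) = E - 1 := by
      rw [hτval, div_mul_cancel₀ _ (by linarith : E + 1 ≠ (0:ℝ))]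
    have hM : (1 + (n:ℝ)*τ)*(1/(1-τ)) ≤ E*((n:ℝ)+1)^2 := by
      rw [mul_one_div, div_le_iff₀ h1τ]
      nlinarith [hEτ, hE1, hn1, hτpos, hτ1]
    have hXYM : ((1 - i)/(-i)) * (s/(s-1)) ≤ E*((n:ℝ)+1)^2 := le_trans hXYle hM
    have hlog := Real.log_le_log (mul_pos hXpos hYpos) hXYM
    have hlogM : Real.log (E*((n:ℝ)+1)^2) = 2*R + 2*Real.log ((n:ℝ)+1) := by
      rw [hEdef, Real.log_mul (Real.exp_pos _).ne' (by positivity),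
        Real.log_exp, Real.log_pow]
      push_cast; ring
    rw [hlogM] at hlog
    linarith
end

section
/- Let Ω ⊂ ℝⁿ be a bounded open convex set with Hilbert metric d_Ω, let p ∈ Ω, and let H be an affine hyperplane intersecting Ω. A point q ∈ H ∩ Ω satisfies d_Ω(p,q) = inf{ d_Ω(p,h) : h ∈ H ∩ Ω } if and only if, denoting by x and y the two points where the line through p and q meets ∂Ω, there exist supporting hyperplanes ξ of Ω at x and η of Ω at y whose projective closures, together with the projective closure of H, contain a common (n−2)-dimensional projective subspace of ℝPⁿ (in particular the intersection may lie in the hyperplane at infinity, which corresponds to ξ, η and H having a common (n−2)-dimensional direction). (When p ∈ H the statement is understood for q = p.) -/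
open Filter MeasureTheory Metric Set

set_option linter.unusedSectionVars false

namespace HP
variable {n : ℕ}

lemma combo_lt {x1 x2 y1 y2 α β : ℝ} (h1 : x1 < y1) (h2 : x2 < y2) (hα : 0 ≤ α) (hβ : 0 ≤ β)
    (hαβ : α + β = 1) : α * x1 + β * x2 < α * y1 + β * y2 := by
  rcases eq_or_lt_of_le hα with h | h
  · have hβ1 : β = 1 := by linarith
    rw [← h, hβ1]; simpa using h2
  · have e1 : α * x1 < α * y1 := by exact mul_lt_mul_of_pos_left h1 h
    have e2 : β * x2 ≤ β * y2 := mul_le_mul_of_nonneg_left h2.le hβ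
    linarith

lemma aux_limit {t₀ X Y : ℝ} (ht₀ : 0 < t₀) (hY : 0 < Y)
    (h : ∀ t, 0 < t → t < t₀ → t * X < Y) : t₀ * X ≤ Y := by
  by_contra hc
  push_neg at hc
  have hX : 0 < X := by nlinarith
  have h1 : Y / X < t₀ := by rw [div_lt_iff₀ hX]; nlinarith
  have h2 : 0 < Y / X := by positivity
  set t := (Y / X + t₀) / 2 with ht
  have h3 := h t (by rw [ht]; linarith) (by rw [ht]; linarith)
  have h4 : Y / X < t := by rw [ht]; linarith
  rw [div_lt_iff₀ hX] at h4
  linarith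

lemma aux_eps {X C : ℝ} (hC : 0 < C) (h : ∀ ε : ℝ, 0 < ε → X < ε * C) : X ≤ 0 := by
  by_contra hc
  push_neg at hc
  have := h (X / (2 * C)) (by positivity)
  rw [div_mul_eq_mul_div] at this
  have h2 : X * C / (2 * C) = X / 2 := by field_simp
  rw [h2] at this
  linarith

lemma aux_scale {X u2 : ℝ} (hu : u2 ≤ 0) (h : ∀ s : ℝ, 0 < s → u2 ≤ s * X) : 0 ≤ X := by
  by_contra hc
  push_neg at hc
  have hs : 0 < (u2 - 1) / X := div_pos_of_neg_of_neg (by linarith) hc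
  have := h _ hs
  rw [div_mul_cancel₀ _ hc.ne] at this
  linarith


/-- translated body -/
def S (Ω : Set (Euc n)) (p : Euc n) : Set (Euc n) := {w | p + w ∈ Ω}

variable {Ω : Set (Euc n)} {p : Euc n}

lemma S_open (h : IsOpen Ω) : IsOpen (S Ω p) :=
  h.preimage (continuous_const.add continuous_id)

lemma S_conv (h : Convex ℝ Ω) : Convex ℝ (S Ω p) := by
  intro x hx y hy α β hα hβ hαβ
  have := h hx hy hα hβ hαβ
  simpa [S, smul_add, add_add_add_comm, ← add_smul, hαβ, one_smul] using
    (by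
      have : α • (p + x) + β • (p + y) ∈ Ω := h hx hy hα hβ hαβ
      have hrw : α • (p + x) + β • (p + y) = p + (α • x + β • y) := by
        rw [smul_add, smul_add]
        rw [add_add_add_comm, ← add_smul, hαβ, one_smul]
      rwa [hrw] at this)

lemma S_zero (hp : p ∈ Ω) : (0 : Euc n) ∈ S Ω p := by simp [S, hp]

lemma S_bdd (h : Bornology.IsBounded Ω) : Bornology.IsVonNBounded ℝ (S Ω p) := by
  rw [NormedSpace.isVonNBounded_iff]
  have : S Ω p = (fun w : Euc n => p + w) ⁻¹' Ω := rfl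
  rw [this]
  have : (fun w : Euc n => p + w) ⁻¹' Ω = (fun z : Euc n => z - p) '' Ω := by
    ext w; simp [Set.mem_image, Set.mem_preimage]
    constructor
    · intro hw; exact ⟨p + w, hw, by abel⟩
    · rintro ⟨z, hz, rfl⟩; simpa [add_sub_cancel] using hz
  rw [this]
  exact (h.sub Bornology.isBounded_singleton)|>.subset (by
    intro w hw; rcases hw with ⟨z, hz, rfl⟩; exact ⟨z, hz, p, rfl, rfl⟩)

lemma S_abs (hΩ : IsOpen Ω) (hp : p ∈ Ω) : Absorbent ℝ (S Ω p) :=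
  absorbent_nhds_zero ((S_open hΩ).mem_nhds (S_zero hp))

lemma gauge_S_pos (hΩ : IsOpen Ω) (hb : Bornology.IsBounded Ω) (hp : p ∈ Ω) {w : Euc n}
    (hw : w ≠ 0) : 0 < gauge (S Ω p) w :=
  (gauge_pos (S_abs hΩ hp) (S_bdd hb)).2 hw


section
variable (hΩo : IsOpen Ω) (hΩc : Convex ℝ Ω) (hΩb : Bornology.IsBounded Ω) (hp : p ∈ Ω)
include hΩo hΩc hΩb hp

lemma sSup_T {w : Euc n} (hw : w ≠ 0) :
    sSup {t : ℝ | p + t • w ∈ Ω} = (gauge (S Ω p) w)⁻¹ := by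
  set g := gauge (S Ω p) w with hg
  have hg0 : 0 < g := gauge_S_pos hΩo hΩb hp hw
  set T : Set ℝ := {t : ℝ | p + t • w ∈ Ω} with hT
  have hmem : ∀ t ∈ T, t < g⁻¹ := by
    intro t ht
    have hts : t • w ∈ S Ω p := ht
    have h1 : gauge (S Ω p) (t • w) < 1 := gauge_lt_one_of_mem_of_isOpen (S_open hΩo) hts
    rcases le_or_gt t 0 with h | h
    · exact lt_of_le_of_lt h (by positivity)
    · rw [gauge_smul_of_nonneg h.le] at h1
      calc t = t * g * g⁻¹ := by field_simp
        _ < 1 * g⁻¹ := by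
            apply mul_lt_mul_of_pos_right _ (by positivity)
            simpa [smul_eq_mul] using h1
        _ = g⁻¹ := one_mul _
  have hsub : Set.Ioo (0:ℝ) g⁻¹ ⊆ T := by
    intro t ht
    have : gauge (S Ω p) (t • w) < 1 := by
      rw [gauge_smul_of_nonneg ht.1.le]
      have : t * g < g⁻¹ * g := by
        exact mul_lt_mul_of_pos_right ht.2 hg0
      simpa [smul_eq_mul, inv_mul_cancel₀ hg0.ne'] using this
    have hmem1 : t • w ∈ S Ω p := by
      have := gauge_lt_one_eq_self_of_isOpen (S_conv hΩc) (S_zero hp) (S_open hΩo)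
      rw [← this]; exact this ▸ ‹gauge (S Ω p) (t • w) < 1›
    exact hmem1
  have hbdd : BddAbove T := ⟨g⁻¹, fun t ht => (hmem t ht).le⟩
  refine le_antisymm (csSup_le ⟨0, by simpa [hT] using hp⟩ fun t ht => (hmem t ht).le) ?_
  calc g⁻¹ = sSup (Set.Ioo (0:ℝ) g⁻¹) := (csSup_Ioo (by positivity)).symm
    _ ≤ sSup T := csSup_le_csSup hbdd (Set.nonempty_Ioo.2 (by positivity)) hsub

lemma sInf_T {w : Euc n} (hw : w ≠ 0) :
    sInf {t : ℝ | p + t • w ∈ Ω} = -(gauge (S Ω p) (-w))⁻¹ := by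
  have hneg : -{t : ℝ | p + t • w ∈ Ω} = {t : ℝ | p + t • (-w) ∈ Ω} := by
    ext t; simp [Set.mem_neg, smul_neg, neg_smul]
  rw [Real.sInf_def, hneg, sSup_T hΩo hΩc hΩb hp (neg_ne_zero.2 hw)]


lemma gauge_lt_one_S {h : Euc n} (hh : h ∈ Ω) : gauge (S Ω p) (h - p) < 1 := by
  apply gauge_lt_one_of_mem_of_isOpen (S_open hΩo)
  show p + (h - p) ∈ Ω
  simpa using hh

lemma hd_formula {h : Euc n} (hh : h ∈ Ω) (hne : h ≠ p) :
    hilbertDist Ω p h =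
      (1 / 2) * Real.log
        ((1 + gauge (S Ω p) (p - h)) / (1 - gauge (S Ω p) (h - p))) := by
  have hw : h - p ≠ 0 := sub_ne_zero.2 hne
  have hb1 : gauge (S Ω p) (h - p) < 1 := gauge_lt_one_S hΩo hΩc hΩb hp hh
  set a := gauge (S Ω p) (p - h) with ha
  set b := gauge (S Ω p) (h - p) with hb
  have ha0 : 0 < a := by
    have := gauge_S_pos (w := p - h) hΩo hΩb hp (by simpa [sub_ne_zero] using (Ne.symm hne))
    exact this
  have hb0 : 0 < b := gauge_S_pos hΩo hΩb hp hw
  rw [hilbertDist, if_neg (Ne.symm hne)]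
  have e1 : sInf (lineParams Ω p h) = -a⁻¹ := by
    rw [lineParams, sInf_T hΩo hΩc hΩb hp hw]
    simp [ha, neg_sub]
  have e2 : sSup (lineParams Ω p h) = b⁻¹ := sSup_T hΩo hΩc hΩb hp hw
  rw [e1, e2]
  congr 1
  rw [show (1 - -a⁻¹) / (- -a⁻¹) * (b⁻¹ / (b⁻¹ - 1)) = (1 + a⁻¹) * a * (b⁻¹ / (b⁻¹ - 1)) by
    field_simp; ring]
  have hbinv : b⁻¹ - 1 ≠ 0 := by
    have : 1 < b⁻¹ := (one_lt_inv₀ hb0).2 hb1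
    linarith
  field_simp
  ring

lemma hd_nonneg {h : Euc n} (hh : h ∈ Ω) : 0 ≤ hilbertDist Ω p h := by
  rcases eq_or_ne h p with rfl | hne
  · simp [hilbertDist]
  · rw [hd_formula hΩo hΩc hΩb hp hh hne]
    have hb1 : gauge (S Ω p) (h - p) < 1 := gauge_lt_one_S hΩo hΩc hΩb hp hh
    have := gauge_nonneg (s := S Ω p) (p - h)
    have h2 : (1:ℝ) ≤ (1 + gauge (S Ω p) (p - h)) / (1 - gauge (S Ω p) (h - p)) := by
      rw [le_div_iff₀ (by linarith)]
      have := gauge_nonneg (s := S Ω p) (h - p)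
      linarith
    have := Real.log_nonneg h2
    linarith

-- strict support lemma
lemma support_strict {f : Euc n →ₗ[ℝ] ℝ} {c : ℝ} (hf : f ≠ 0)
    (hsupp : ∀ z ∈ Ω, f z ≤ c) {z0 : Euc n} (hz0 : z0 ∈ Ω) : f z0 < c := by
  obtain ⟨e, he⟩ : ∃ e, f e ≠ 0 := by
    by_contra hc; push_neg at hc; exact hf (by ext x; simp [hc x])
  obtain ⟨e, he, hne⟩ : ∃ e, 0 < f e ∧ e ≠ 0 := by
    rcases lt_or_gt_of_ne he with h | h
    · refine ⟨-e, by simpa using h, ?_⟩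
      intro h0
      rw [neg_eq_zero] at h0
      rw [h0] at he; simp at he
    · exact ⟨e, h, fun h0 => he (by rw [h0]; simp)⟩
  obtain ⟨ε, hε, hball⟩ := Metric.isOpen_iff.1 hΩo z0 hz0
  set δ := ε / (2 * ‖e‖ + 1) with hδ
  have hnorm : 0 < ‖e‖ := norm_pos_iff.2 hne
  have hδ0 : 0 < δ := by positivity
  have hz : z0 + δ • e ∈ Ω := by
    apply hball
    rw [Metric.mem_ball, dist_eq_norm]
    have : ‖z0 + δ • e - z0‖ = δ * ‖e‖ := by
      rw [add_sub_cancel_left, norm_smul, Real.norm_of_nonneg hδ0.le]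
    rw [this, hδ]
    rw [div_mul_eq_mul_div, div_lt_iff₀ (by positivity)]
    nlinarith
  have hle := hsupp _ hz
  simp only [map_add, LinearMap.map_smul, smul_eq_mul] at hle
  nlinarith

-- support gauge bound
lemma support_gauge {f : Euc n →ₗ[ℝ] ℝ} {c : ℝ}
    (hsupp : ∀ z ∈ Ω, f z ≤ c) (hA : 0 < c - f p) (w : Euc n) :
    f w ≤ (c - f p) * gauge (S Ω p) w := by
  set A := c - f p with hAdef
  set g := gauge (S Ω p) w with hg
  have hg0 : 0 ≤ g := gauge_nonneg _
  rcases le_or_gt (f w) 0 with h | h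
  · exact h.trans (by positivity)
  by_contra hcon
  push_neg at hcon
  -- find t with 0 < t, t * g < 1, A < t * f w
  have hkey : ∀ t : ℝ, 0 < t → t * g < 1 → t * f w ≤ A := by
    intro t ht htg
    have hmem : t • w ∈ S Ω p := by
      have h1 : gauge (S Ω p) (t • w) < 1 := by
        rw [gauge_smul_of_nonneg ht.le]; simpa [smul_eq_mul] using htg
      have := gauge_lt_one_eq_self_of_isOpen (S_conv hΩc) (S_zero hp) (S_open hΩo)
      rw [← this]; exact h1
    have hle : f (p + t • w) ≤ c := hsupp _ hmem
    simp only [map_add, LinearMap.map_smul, smul_eq_mul] at hle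
    simp only [hAdef]; linarith
  rcases eq_or_lt_of_le hg0 with hg0' | hg0'
  · have := hkey ((A + 1) / f w) (by positivity) (by rw [← hg0']; simp)
    rw [div_mul_cancel₀ _ h.ne'] at this
    linarith
  · have hAfw : A / f w < g⁻¹ := by
      rw [div_lt_iff₀ h]
      have h2 : A < f w / g := (lt_div_iff₀ hg0').2 hcon
      rw [div_eq_inv_mul] at h2
      exact h2
    set t := (A / f w + g⁻¹) / 2 with htdef
    have ht0 : 0 < t := by
      have : 0 < A / f w := by positivity
      have : 0 < g⁻¹ := by positivity
      positivity
    have htg : t * g < 1 := by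
      have : t < g⁻¹ := by rw [htdef]; linarith
      calc t * g < g⁻¹ * g := mul_lt_mul_of_pos_right this hg0'
        _ = 1 := inv_mul_cancel₀ hg0'.ne'
    have := hkey t ht0 htg
    have htmore : A / f w < t := by rw [htdef]; linarith
    have : A < t * f w := by
      rw [div_lt_iff₀ h] at htmore; linarith
    linarith [hkey t ht0 htg]

include hΩo hΩc hΩb hp in
lemma reverse_dir {q : Euc n} (hq : q ∈ Ω) (hqne : q ≠ p)
    (fH : Euc n →ₗ[ℝ] ℝ) (cH : ℝ) (hfH : fH ≠ 0) (hqH : fH q = cH)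
    (fξ : Euc n →ₗ[ℝ] ℝ) (cξ : ℝ) (fη : Euc n →ₗ[ℝ] ℝ) (cη : ℝ)
    (hfξ : fξ ≠ 0) (hfη : fη ≠ 0)
    (hxi : fξ (p + sInf (lineParams Ω p q) • (q - p)) = cξ)
    (hsξ : ∀ z ∈ Ω, fξ z ≤ cξ)
    (heta : fη (p + sSup (lineParams Ω p q) • (q - p)) = cη)
    (hsη : ∀ z ∈ Ω, fη z ≤ cη)
    (g : Fin 3 → ℝ)
    (hrelf : g 0 • fξ + g 1 • fη + g 2 • fH = 0)
    (hrelc : g 0 * cξ + g 1 * cη + g 2 * cH = 0)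
    (hgne : ¬(g 0 = 0 ∧ g 1 = 0 ∧ g 2 = 0)) :
    hilbertDist Ω p q = sInf (hilbertDist Ω p '' ({x : Euc n | fH x = cH} ∩ Ω)) := by
  set v := q - p with hv
  have hvne : v ≠ 0 := sub_ne_zero.2 hqne
  set a := gauge (S Ω p) (-v) with hadef
  set b := gauge (S Ω p) v with hbdef
  have ha0 : 0 < a := gauge_S_pos hΩo hΩb hp (neg_ne_zero.2 hvne)
  have hb0 : 0 < b := gauge_S_pos hΩo hΩb hp hvne
  have hb1 : b < 1 := by
    have h1 : gauge (S Ω p) (q - p) < 1 := gauge_lt_one_S hΩo hΩc hΩb hp hq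
    rwa [← hv] at h1
  set A := cξ - fξ p with hAdef
  set B := cη - fη p with hBdef
  have hA : 0 < A := by
    have := support_strict hΩo hΩc hΩb hp hfξ hsξ hp; simp [hAdef]; linarith
  have hB : 0 < B := by
    have := support_strict hΩo hΩc hΩb hp hfη hsη hp; simp [hBdef]; linarith
  -- compute fξ v and fη v
  have hfxv : fξ v = -(A * a) := by
    have hsinf : sInf (lineParams Ω p q) = -(gauge (S Ω p) (-v))⁻¹ :=
      sInf_T hΩo hΩc hΩb hp hvne
    rw [hsinf] at hxi
    simp only [map_add, LinearMap.map_smul, smul_eq_mul] at hxi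
    rw [← hadef] at hxi
    have : -(a⁻¹ * fξ v) = A := by rw [hAdef]; linarith [hxi]
    have h2 : a * -(a⁻¹ * fξ v) = a * A := by rw [this]
    rw [mul_neg, ← mul_assoc, mul_inv_cancel₀ ha0.ne', one_mul] at h2
    linarith
  have hfyv : fη v = B * b := by
    have hssup : sSup (lineParams Ω p q) = (gauge (S Ω p) v)⁻¹ :=
      sSup_T hΩo hΩc hΩb hp hvne
    rw [hssup] at heta
    simp only [map_add, LinearMap.map_smul, smul_eq_mul] at heta
    rw [← hbdef] at heta
    have : b⁻¹ * fη v = B := by rw [hBdef]; linarith [heta]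
    have h2 : b * (b⁻¹ * fη v) = b * B := by rw [this]
    rw [← mul_assoc, mul_inv_cancel₀ hb0.ne', one_mul] at h2
    linarith
  clear_value v a b A B
  set aq := cξ - fξ q with haqdef
  set bq := cη - fη q with hbqdef
  have haq : aq = A * (1 + a) := by
    have : fξ q = fξ p + fξ v := by rw [hv, map_sub]; ring
    rw [haqdef, this, hfxv, hAdef]; ring
  have hbq : bq = B * (1 - b) := by
    have : fη q = fη p + fη v := by rw [hv, map_sub]; ring
    rw [hbqdef, this, hfyv, hBdef]; ring
  have haq0 : 0 < aq := by rw [haq]; positivity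
  have hbq0 : 0 < bq := by rw [hbq]; nlinarith
  clear_value aq bq
  -- relation evaluated pointwise
  have hrelz : ∀ z : Euc n, g 0 * (cξ - fξ z) + g 1 * (cη - fη z) + g 2 * (cH - fH z) = 0 := by
    intro z
    have h1 := LinearMap.congr_fun hrelf z
    simp only [LinearMap.add_apply, LinearMap.smul_apply, smul_eq_mul,
      LinearMap.zero_apply] at h1
    linear_combination hrelc - h1
  have hg01 : ¬(g 0 = 0 ∧ g 1 = 0) := by
    rintro ⟨h0, h1⟩
    have hg2 : g 2 ≠ 0 := fun h2 => hgne ⟨h0, h1, h2⟩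
    rw [h0, h1] at hrelf
    simp only [zero_smul, zero_add] at hrelf
    rcases smul_eq_zero.1 hrelf with h | h
    · exact hg2 h
    · exact hfH h
  -- p is not on H
  have hpH : fH p ≠ cH := by
    intro hfp
    have e1 : g 0 * A + g 1 * B = 0 := by
      have := hrelz p; rw [hfp] at this; simp at this
      rw [hAdef, hBdef]; linarith
    have e2 : g 0 * aq + g 1 * bq = 0 := by
      have := hrelz q; rw [hqH] at this; simp at this
      rw [haqdef, hbqdef]; linarith
    rw [haq, hbq] at e2
    have e3 : g 1 * (B * (a + b)) = 0 := by linear_combination (a + 1) * e1 - e2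
    have hg1 : g 1 = 0 := by
      rcases mul_eq_zero.1 e3 with h | h
      · exact h
      · exfalso
        have : 0 < B * (a + b) := by positivity
        linarith
    have hg0 : g 0 = 0 := by
      rw [hg1] at e1; simp at e1
      rcases e1 with h | h
      · exact h
      · exfalso; linarith
    exact hg01 ⟨hg0, hg1⟩
  -- main inequality for every h in H ∩ Ω
  have hmain : ∀ h ∈ {x : Euc n | fH x = cH} ∩ Ω, hilbertDist Ω p q ≤ hilbertDist Ω p h := by
    rintro h ⟨hhH, hhΩ⟩
    have hhne : h ≠ p := by
      intro rfl_h; rw [rfl_h] at hhH; exact hpH hhH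
    set w := h - p with hw
    have hwne : w ≠ 0 := sub_ne_zero.2 hhne
    set ga := gauge (S Ω p) (-w) with hgadef
    set gb := gauge (S Ω p) w with hgbdef
    have hga0 : 0 ≤ ga := gauge_nonneg _
    have hgb1 : gb < 1 := by
      have h1 : gauge (S Ω p) (h - p) < 1 := gauge_lt_one_S hΩo hΩc hΩb hp hhΩ
      rwa [← hw] at h1
    set ah := cξ - fξ h with hahdef
    set bh := cη - fη h with hbhdef
    clear_value w ga gb ah bh
    have hdet : ah * bq = aq * bh := by
      have e2 : g 0 * aq + g 1 * bq = 0 := by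
        have := hrelz q; rw [hqH] at this; simp at this
        rw [haqdef, hbqdef]; linarith
      have e3 : g 0 * ah + g 1 * bh = 0 := by
        have := hrelz h; rw [hhH] at this; simp at this
        rw [hahdef, hbhdef]; linarith
      rcases (not_and_or.1 hg01) with h0 | h1
      · -- g 0 ≠ 0
        have h5 : g 0 * (ah * bq - aq * bh) = 0 := by linear_combination bq * e3 - bh * e2
        rcases mul_eq_zero.1 h5 with h | h
        · exact absurd h h0
        · linarith
      · have h5 : g 1 * (ah * bq - aq * bh) = 0 := by linear_combination ah * e2 - aq * e3
        rcases mul_eq_zero.1 h5 with h | h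
        · exact absurd h h1
        · linarith
    -- bounds
    have hfxw : fξ (-w) ≤ A * ga := by
      have := support_gauge hΩo hΩc hΩb hp hsξ (by rw [← hAdef]; exact hA) (-w)
      rwa [← hAdef, ← hgadef] at this
    have hfyw : fη w ≤ B * gb := by
      have := support_gauge hΩo hΩc hΩb hp hsη (by rw [← hBdef]; exact hB) w
      rwa [← hBdef, ← hgbdef] at this
    have hah_le : ah ≤ A * (1 + ga) := by
      have hfh : fξ h = fξ p + fξ w := by rw [hw, map_sub]; ring
      have hfw : -(fξ w) ≤ A * ga := by rw [← map_neg]; exact hfxw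
      have heq : ah = A - fξ w := by rw [hahdef, hAdef, hfh]; ring
      rw [heq]
      calc A - fξ w ≤ A + A * ga := by linarith
        _ = A * (1 + ga) := by ring
    have hbh_ge : B * (1 - gb) ≤ bh := by
      have hfh : fη h = fη p + fη w := by rw [hw, map_sub]; ring
      have heq : bh = B - fη w := by rw [hbhdef, hBdef, hfh]; ring
      rw [heq]
      calc B * (1 - gb) = B - B * gb := by ring
        _ ≤ B - fη w := by linarith
    have hbh0 : 0 < bh := by
      have h6 : 0 < B * (1 - gb) := mul_pos hB (by linarith)
      linarith
    have hah0 : 0 < ah := by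
      have h7 : ah = aq * bh / bq := by rw [eq_div_iff hbq0.ne']; linarith [hdet]
      rw [h7]; positivity
    -- core inequality
    have hcore : (1 + a) / (1 - b) ≤ (1 + ga) / (1 - gb) := by
      rw [div_le_div_iff₀ (by linarith) (by linarith)]
      -- (1+a)(1-gb) ≤ (1+ga)(1-b)
      -- multiply by A*B>0 : aq/A = 1+a, bq/B = 1-b
      have h1 : aq * (B * (1 - gb)) ≤ aq * bh := by
        exact mul_le_mul_of_nonneg_left hbh_ge haq0.le
      have h2 : ah * bq ≤ (A * (1 + ga)) * bq := mul_le_mul_of_nonneg_right hah_le hbq0.le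
      have h3 : aq * (B * (1 - gb)) ≤ (A * (1 + ga)) * bq := by
        calc aq * (B * (1 - gb)) ≤ aq * bh := h1
          _ = ah * bq := hdet.symm
          _ ≤ (A * (1 + ga)) * bq := h2
      rw [haq, hbq] at h3
      have hAB : 0 < A * B := by positivity
      have h4 : (A * B) * ((1 + a) * (1 - gb)) ≤ (A * B) * ((1 + ga) * (1 - b)) := by
        calc (A * B) * ((1 + a) * (1 - gb)) = A * (1 + a) * (B * (1 - gb)) := by ring
          _ ≤ A * (1 + ga) * (B * (1 - b)) := h3
          _ = (A * B) * ((1 + ga) * (1 - b)) := by ring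
      exact le_of_mul_le_mul_left h4 hAB
    -- conclude
    rw [hd_formula hΩo hΩc hΩb hp hq hqne, hd_formula hΩo hΩc hΩb hp hhΩ hhne]
    have e5 : p - q = -v := by rw [hv]; abel
    have e6 : p - h = -w := by rw [hw]; abel
    rw [e5, e6, ← hv, ← hw, ← hadef, ← hbdef, ← hgadef, ← hgbdef]
    apply mul_le_mul_of_nonneg_left _ (by norm_num : (0:ℝ) ≤ 1/2)
    exact Real.log_le_log (div_pos (by linarith) (by linarith)) hcore
  -- finish
  have hmem : hilbertDist Ω p q ∈ hilbertDist Ω p '' ({x : Euc n | fH x = cH} ∩ Ω) :=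
    ⟨q, ⟨hqH, hq⟩, rfl⟩
  have hlb : ∀ y ∈ hilbertDist Ω p '' ({x : Euc n | fH x = cH} ∩ Ω), hilbertDist Ω p q ≤ y := by
    rintro y ⟨h, hh, rfl⟩; exact hmain h hh
  exact le_antisymm (le_csInf ⟨_, hmem⟩ hlb) (csInf_le ⟨_, fun y hy => hlb y hy⟩ hmem)

include hΩo hΩc hΩb hp in
set_option maxHeartbeats 2000000 in
lemma forward_dir {q : Euc n} (hq : q ∈ Ω) (hqne : q ≠ p)
    (fH : Euc n →ₗ[ℝ] ℝ) (cH : ℝ) (hfH : fH ≠ 0) (hqH : fH q = cH)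
    (hmin : hilbertDist Ω p q = sInf (hilbertDist Ω p '' ({x : Euc n | fH x = cH} ∩ Ω))) :
    ∃ (fξ : Euc n →ₗ[ℝ] ℝ) (cξ : ℝ) (fη : Euc n →ₗ[ℝ] ℝ) (cη : ℝ),
      fξ ≠ 0 ∧ fη ≠ 0 ∧
      fξ (p + sInf (lineParams Ω p q) • (q - p)) = cξ ∧
      (∀ z ∈ Ω, fξ z ≤ cξ) ∧
      fη (p + sSup (lineParams Ω p q) • (q - p)) = cη ∧
      (∀ z ∈ Ω, fη z ≤ cη) ∧
      ∃ g : Fin 3 → ℝ,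
        (g 0 • fξ + g 1 • fη + g 2 • fH = 0) ∧
        (g 0 * cξ + g 1 * cη + g 2 * cH = 0) ∧
        ¬(g 0 = 0 ∧ g 1 = 0 ∧ g 2 = 0) := by
  have hvne : q - p ≠ 0 := sub_ne_zero.2 hqne
  set G : Euc n → ℝ := gauge (S Ω p) with hGdef
  have hmemS : ∀ {w : Euc n}, G w < 1 → w ∈ S Ω p := by
    intro w hw
    rw [← gauge_lt_one_eq_self_of_isOpen (S_conv hΩc) (S_zero hp) (S_open hΩo)]
    exact hw
  have hmemS' : ∀ {w : Euc n}, w ∈ S Ω p → G w < 1 :=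
    fun hw => gauge_lt_one_of_mem_of_isOpen (S_open hΩo) hw
  have hGnonneg : ∀ w : Euc n, 0 ≤ G w := fun w => gauge_nonneg w
  have hGzero : G 0 = 0 := gauge_zero
  have hGsmul : ∀ (t : ℝ) (w : Euc n), 0 ≤ t → G (t • w) = t * G w := by
    intro t w ht; exact gauge_smul_of_nonneg ht w
  have hGadd : ∀ w1 w2 : Euc n, G (w1 + w2) ≤ G w1 + G w2 := by
    intro w1 w2; exact gauge_add_le (S_conv hΩc) (S_abs hΩo hp) _ _
  have hGcont : Continuous G :=
    continuous_gauge (S_conv hΩc) ((S_open hΩo).mem_nhds (S_zero hp))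
  have hGpos : ∀ {w : Euc n}, w ≠ 0 → 0 < G w := fun hw => gauge_S_pos hΩo hΩb hp hw
  have hGlt1 : ∀ {z : Euc n}, z ∈ Ω → G (z - p) < 1 := fun hz => gauge_lt_one_S hΩo hΩc hΩb hp hz
  have hdform : ∀ {h : Euc n}, h ∈ Ω → h ≠ p →
      hilbertDist Ω p h = (1 / 2) * Real.log ((1 + G (p - h)) / (1 - G (h - p))) :=
    fun hh hne => hd_formula hΩo hΩc hΩb hp hh hne
  set a := G (p - q) with hadef
  set b := G (q - p) with hbdef
  have ha0 : 0 < a := hGpos (by rw [← neg_sub]; exact neg_ne_zero.2 hvne)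
  have hb0 : 0 < b := hGpos hvne
  have hb1 : b < 1 := hGlt1 hq
  have hsinfT : sInf (lineParams Ω p q) = -a⁻¹ := by
    rw [hadef, hGdef]
    have h1 : sInf {t : ℝ | p + t • (q - p) ∈ Ω} = -(gauge (S Ω p) (-(q - p)))⁻¹ :=
      sInf_T hΩo hΩc hΩb hp hvne
    rw [neg_sub] at h1
    exact h1
  have hssupT : sSup (lineParams Ω p q) = b⁻¹ := by
    rw [hbdef, hGdef]
    exact sSup_T hΩo hΩc hΩb hp hvne
  clear_value G a b
  set lam := (1 + a) / (1 - b) with hlamdef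
  clear_value lam
  have hlam1 : 1 < lam := by
    rw [hlamdef, lt_div_iff₀ (by linarith)]; linarith
  have hDval : hilbertDist Ω p q = (1 / 2) * Real.log lam := by
    rw [hlamdef, hadef, hbdef]
    exact hdform hq hqne
  have hDpos : 0 < hilbertDist Ω p q := by
    rw [hDval]
    have := Real.log_pos hlam1
    linarith
  -- minimality
  have hbdd : BddBelow (hilbertDist Ω p '' ({x : Euc n | fH x = cH} ∩ Ω)) := by
    refine ⟨0, ?_⟩
    rintro y ⟨h, ⟨hH, hh⟩, rfl⟩
    exact hd_nonneg hΩo hΩc hΩb hp hh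
  have hge : ∀ h : Euc n, fH h = cH → h ∈ Ω → hilbertDist Ω p q ≤ hilbertDist Ω p h := by
    intro h hH hh
    rw [hmin]
    exact csInf_le hbdd ⟨h, ⟨hH, hh⟩, rfl⟩
  have hpH : fH p ≠ cH := by
    intro hc
    have h1 := hge p hc hp
    have h2 : hilbertDist Ω p p = 0 := by simp [hilbertDist]
    rw [h2] at h1
    linarith
  set c' := cH - fH p with hc'def
  clear_value c'
  have hc' : c' ≠ 0 := by rw [hc'def]; exact sub_ne_zero.2 (Ne.symm hpH)
  set θ := (lam - 1) / c' with hθdef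
  clear_value θ
  -- the function Φ and its sublevel set U
  set Φ : Euc n → ℝ := fun w => G (-w) + lam * G w with hΦdef
  have hΦ0 : Φ 0 = 0 := by simp [hΦdef, hGzero]
  have hΦsmul : ∀ (t : ℝ) (w : Euc n), 0 ≤ t → Φ (t • w) = t * Φ w := by
    intro t w ht
    simp only [hΦdef, ← smul_neg, hGsmul t _ ht]
    ring
  have hΦcont : Continuous Φ := ((hGcont.comp continuous_neg).add (continuous_const.mul hGcont))
  clear_value Φ
  set U := {w : Euc n | Φ w < lam - 1} with hUdef
  have hUopen : IsOpen U := isOpen_lt hΦcont continuous_const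
  have hUconv : Convex ℝ U := by
    intro x hx y hy α β hα hβ hαβ
    simp only [hUdef, Set.mem_setOf_eq] at hx hy ⊢
    have hGneg : G (-(α • x + β • y)) ≤ α * G (-x) + β * G (-y) := by
      have : -(α • x + β • y) = α • (-x) + β • (-y) := by rw [smul_neg, smul_neg]; abel
      rw [this]
      refine (hGadd _ _).trans ?_
      rw [hGsmul α _ hα, hGsmul β _ hβ]
    have hGpls : G (α • x + β • y) ≤ α * G x + β * G y := by
      refine (hGadd _ _).trans ?_
      rw [hGsmul α _ hα, hGsmul β _ hβ]
    have hcomb := combo_lt hx hy hα hβ hαβ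
    have : Φ (α • x + β • y) ≤ α * Φ x + β * Φ y := by
      simp only [hΦdef]
      have h3 : lam * G (α • x + β • y) ≤ lam * (α * G x + β * G y) :=
        mul_le_mul_of_nonneg_left hGpls (by linarith)
      nlinarith [hGneg]
    have : Φ (α • x + β • y) < α * (lam - 1) + β * (lam - 1) := by
      calc Φ (α • x + β • y) ≤ α * Φ x + β * Φ y := this
        _ < α * (lam - 1) + β * (lam - 1) := hcomb
    calc Φ (α • x + β • y) < α * (lam - 1) + β * (lam - 1) := this
      _ = lam - 1 := by rw [← add_mul, hαβ, one_mul]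
  have hH'conv : Convex ℝ {w : Euc n | fH w = c'} := by
    intro x hx y hy α β hα hβ hαβ
    simp only [Set.mem_setOf_eq] at hx hy ⊢
    rw [map_add, LinearMap.map_smul, LinearMap.map_smul, smul_eq_mul, smul_eq_mul, hx, hy]
    rw [← add_mul, hαβ, one_mul]
  have hdisj : Disjoint U {w : Euc n | fH w = c'} := by
    rw [Set.disjoint_left]
    intro w hwU hwH
    simp only [hUdef, Set.mem_setOf_eq] at hwU
    simp only [Set.mem_setOf_eq] at hwH
    have hwne : w ≠ 0 := by
      intro h0; rw [h0] at hwH; simp at hwH; exact hc' hwH.symm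
    have hGw1 : G w < 1 := by
      have h1 : lam * G w ≤ Φ w := by
        simp only [hΦdef]; have := hGnonneg (-w); linarith
      have h2 : lam * G w < lam * 1 := by
        rw [mul_one]; linarith
      exact lt_of_mul_lt_mul_left h2 (by linarith)
    have hhΩ : p + w ∈ Ω := hmemS hGw1
    have hhH : fH (p + w) = cH := by
      rw [map_add, hwH, hc'def]; ring
    have hhne : p + w ≠ p := by
      intro h0
      apply hwne
      have := congrArg (fun z => z - p) h0
      simpa using this
    have h3 := hge (p + w) hhH hhΩ
    rw [hDval, hdform hhΩ hhne] at h3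
    have e1 : p - (p + w) = -w := by abel
    have e2 : p + w - p = w := by abel
    rw [e1, e2] at h3
    have h4 : Real.log lam ≤ Real.log ((1 + G (-w)) / (1 - G w)) := by linarith
    have h5 : lam ≤ (1 + G (-w)) / (1 - G w) := by
      rwa [Real.log_le_log_iff (by linarith) (by
        have := hGnonneg (-w); apply div_pos <;> linarith)] at h4
    rw [le_div_iff₀ (by linarith)] at h5
    have : lam - 1 ≤ G (-w) + lam * G w := by nlinarith
    simp only [hΦdef] at hwU
    linarith
  -- first Hahn-Banach separation
  obtain ⟨f, u, hfu, hfa⟩ := geometric_hahn_banach_open hUconv hUopen hH'conv hdisj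
  have h0U : (0 : Euc n) ∈ U := by
    simp only [hUdef, Set.mem_setOf_eq, hΦ0]; linarith
  have hu0 : 0 < u := by
    have := hfu 0 h0U
    simpa using this
  obtain ⟨z₀, hz₀⟩ : ∃ z : Euc n, fH z ≠ 0 := by
    by_contra hcon
    push_neg at hcon
    exact hfH (LinearMap.ext fun z => by simp [hcon z])
  set w₀ := (c' / fH z₀) • z₀ with hw₀def
  have hw₀ : fH w₀ = c' := by
    rw [hw₀def, LinearMap.map_smul, smul_eq_mul]
    field_simp
  clear_value w₀
  have hker : ∀ k : Euc n, fH k = 0 → f k = 0 := by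
    intro k hk
    by_contra hfk
    obtain ⟨t, htdef⟩ : ∃ t : ℝ, t = (u - 1 - f w₀) / f k := ⟨_, rfl⟩
    have hmemk : fH (w₀ + t • k) = c' := by
      rw [map_add, LinearMap.map_smul, hk, smul_zero, add_zero, hw₀]
    have h1 := hfa _ hmemk
    rw [map_add, ContinuousLinearMap.map_smul, smul_eq_mul, htdef,
      div_mul_cancel₀ _ hfk] at h1
    linarith
  set μ := f z₀ / fH z₀ with hμdef
  clear_value μ
  have hfμ : ∀ w : Euc n, f w = μ * fH w := by
    intro w
    have hk : fH (w - (fH w / fH z₀) • z₀) = 0 := by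
      rw [map_sub, LinearMap.map_smul, smul_eq_mul]
      field_simp; ring
    have := hker _ hk
    rw [map_sub, ContinuousLinearMap.map_smul, smul_eq_mul] at this
    have h2 : f w = (fH w / fH z₀) * f z₀ := by linarith
    rw [h2, hμdef]; ring
  have hμc : 0 < μ * c' := by
    have h1 := hfa w₀ hw₀
    rw [hfμ w₀, hw₀] at h1
    linarith
  have hμ0 : μ ≠ 0 := by
    intro h0; rw [h0, zero_mul] at hμc; exact lt_irrefl 0 hμc
  -- global inequality θ * fH ≤ Φ
  have hkey : ∀ w : Euc n, θ * fH w ≤ Φ w := by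
    intro w
    rcases eq_or_ne w 0 with rfl | hw
    · simp [hΦ0]
    · have hΦpos : 0 < Φ w := by
        have h1 : 0 < G w := hGpos hw
        have h2 := hGnonneg (-w)
        simp only [hΦdef]
        nlinarith
      have hsc : ∀ t : ℝ, 0 < t → t < (lam - 1) / Φ w → t * (μ * fH w) < μ * c' := by
        intro t ht htl
        have htU : t • w ∈ U := by
          simp only [hUdef, Set.mem_setOf_eq, hΦsmul t w ht.le]
          rw [lt_div_iff₀ hΦpos] at htl
          linarith
        have h1 := hfu _ htU
        rw [ContinuousLinearMap.map_smul, smul_eq_mul, hfμ w] at h1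
        have h2 := hfa w₀ hw₀
        rw [hfμ w₀, hw₀] at h2
        linarith
      have hlim := aux_limit (div_pos (by linarith) hΦpos) hμc hsc
      -- hlim : (lam - 1) / Φ w * (μ * fH w) ≤ μ * c'
      have h8 : (lam - 1) * (μ * fH w) ≤ (μ * c') * Φ w := by
        have := mul_le_mul_of_nonneg_right hlim hΦpos.le
        calc (lam - 1) * (μ * fH w) = ((lam - 1) / Φ w * (μ * fH w)) * Φ w := by
              field_simp
          _ ≤ (μ * c') * Φ w := this
      have hgoal : θ * fH w = ((lam - 1) * (μ * fH w)) / (μ * c') := by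
        rw [hθdef]; field_simp
      rw [hgoal, div_le_iff₀ hμc]
      nlinarith [h8]
  have hΦv : Φ (q - p) = lam - 1 := by
    have h1b : (1:ℝ) - b ≠ 0 := by linarith
    simp only [hΦdef]
    rw [neg_sub, ← hadef, ← hbdef, hlamdef]
    field_simp
    ring
  have hfv : fH (q - p) = c' := by rw [map_sub, hqH, hc'def]
  have hθc : θ * c' = lam - 1 := by rw [hθdef]; field_simp
  -- second separation, on (Euc n) × ℝ
  set A2 := {z : Euc n × ℝ | lam * G z.1 < z.2} with hA2def
  set B2 := {z : Euc n × ℝ | z.2 ≤ θ * fH z.1 - G (-z.1)} with hB2def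
  have hA2open : IsOpen A2 :=
    isOpen_lt (continuous_const.mul (hGcont.comp continuous_fst)) continuous_snd
  have hA2conv : Convex ℝ A2 := by
    rintro ⟨x, s⟩ hx ⟨y, t⟩ hy α β hα hβ hαβ
    simp only [hA2def, Set.mem_setOf_eq] at hx hy ⊢
    have hGpls : G (α • x + β • y) ≤ α * G x + β * G y := by
      refine (hGadd _ _).trans ?_
      rw [hGsmul α _ hα, hGsmul β _ hβ]
    have h1 : lam * G (α • x + β • y) ≤ α * (lam * G x) + β * (lam * G y) := by
      have := mul_le_mul_of_nonneg_left hGpls (by linarith : (0:ℝ) ≤ lam)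
      nlinarith
    have h2 := combo_lt hx hy hα hβ hαβ
    calc lam * G ((α • (x, s) + β • (y, t)) : Euc n × ℝ).1
        = lam * G (α • x + β • y) := by rfl
      _ ≤ α * (lam * G x) + β * (lam * G y) := h1
      _ < α * s + β * t := h2
      _ = ((α • (x, s) + β • (y, t)) : Euc n × ℝ).2 := by rfl
  have hB2conv : Convex ℝ B2 := by
    rintro ⟨x, s⟩ hx ⟨y, t⟩ hy α β hα hβ hαβ
    simp only [hB2def, Set.mem_setOf_eq] at hx hy ⊢
    have hGneg : G (-(α • x + β • y)) ≤ α * G (-x) + β * G (-y) := by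
      have : -(α • x + β • y) = α • (-x) + β • (-y) := by rw [smul_neg, smul_neg]; abel
      rw [this]
      refine (hGadd _ _).trans ?_
      rw [hGsmul α _ hα, hGsmul β _ hβ]
    have hlin : θ * fH (α • x + β • y) = α * (θ * fH x) + β * (θ * fH y) := by
      rw [map_add, LinearMap.map_smul, LinearMap.map_smul, smul_eq_mul, smul_eq_mul]
      ring
    show α * s + β * t ≤ θ * fH (α • x + β • y) - G (-(α • x + β • y))
    have e1 : α * s ≤ α * (θ * fH x - G (-x)) := mul_le_mul_of_nonneg_left hx hα
    have e2 : β * t ≤ β * (θ * fH y - G (-y)) := mul_le_mul_of_nonneg_left hy hβ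
    rw [hlin]
    nlinarith [hGneg]
  have hdisj2 : Disjoint A2 B2 := by
    rw [Set.disjoint_left]
    rintro ⟨x, s⟩ hxA hxB
    simp only [hA2def, hB2def, Set.mem_setOf_eq] at hxA hxB
    have := hkey x
    simp only [hΦdef] at this
    linarith
  obtain ⟨F, u2, hFA, hFB⟩ := geometric_hahn_banach_open hA2conv hA2open hB2conv hdisj2
  have hc2 : F ((0 : Euc n), (1 : ℝ)) < u2 := by
    apply hFA
    simp [hA2def, hGzero]
  have hu2 : u2 ≤ 0 := by
    have h1 : ((0 : Euc n), (0 : ℝ)) ∈ B2 := by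
      simp [hB2def, hGzero]
    have := hFB _ h1
    rw [Prod.mk_zero_zero, map_zero] at this; exact this
  set c2 := F ((0 : Euc n), (1 : ℝ)) with hc2def
  have hc2neg : c2 < 0 := by rw [hc2def]; linarith
  have hFdecomp : ∀ (w : Euc n) (t : ℝ), F (w, t) = F (w, 0) + t * c2 := by
    intro w t
    have : ((w, t) : Euc n × ℝ) = (w, 0) + t • ((0 : Euc n), (1 : ℝ)) := by
      simp [Prod.ext_iff]
    rw [this, map_add, ContinuousLinearMap.map_smul, smul_eq_mul, hc2def]
  -- B2 inequality : 0 ≤ F(w,0) + q(w) * c2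
  have hBineq : ∀ w : Euc n, 0 ≤ F (w, 0) + (θ * fH w - G (-w)) * c2 := by
    intro w
    apply aux_scale hu2
    intro s hs
    have hmem : ((s • w, s * (θ * fH w - G (-w))) : Euc n × ℝ) ∈ B2 := by
      simp only [hB2def, Set.mem_setOf_eq]
      rw [LinearMap.map_smul, smul_eq_mul, ← smul_neg, hGsmul s _ hs.le]
      calc s * (θ * fH w - G (-w)) ≤ s * (θ * fH w - G (-w)) := le_refl _
        _ = θ * (s * fH w) - s * G (-w) := by ring
    have h1 := hFB _ hmem
    have h2 : ((s • w, s * (θ * fH w - G (-w))) : Euc n × ℝ)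
        = s • ((w, (θ * fH w - G (-w))) : Euc n × ℝ) := by
      simp [Prod.ext_iff]
    rw [h2, ContinuousLinearMap.map_smul, smul_eq_mul] at h1
    rw [hFdecomp w _] at h1
    calc u2 ≤ s * (F (w, 0) + (θ * fH w - G (-w)) * c2) := h1
      _ = s * (F (w, 0) + (θ * fH w - G (-w)) * c2) := rfl
  -- A2 inequality : F(w,0) + lam*G w * c2 ≤ 0
  have hAineq : ∀ w : Euc n, F (w, 0) + lam * G w * c2 ≤ 0 := by
    intro w
    apply aux_eps (by linarith : (0:ℝ) < -c2)
    intro ε hε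
    have hmem : ((w, lam * G w + ε) : Euc n × ℝ) ∈ A2 := by
      simp only [hA2def, Set.mem_setOf_eq]; linarith
    have h1 := hFA _ hmem
    rw [hFdecomp w _] at h1
    nlinarith [h1, hu2]
  -- the linear functional ψ2
  set f1 : Euc n →ₗ[ℝ] ℝ := F.toLinearMap.comp (LinearMap.inl ℝ (Euc n) ℝ) with hf1def
  have hf1 : ∀ w : Euc n, f1 w = F (w, 0) := by
    intro w; simp [hf1def, LinearMap.inl_apply]
  set ψ2 : Euc n →ₗ[ℝ] ℝ := (-c2)⁻¹ • f1 with hψ2def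
  have hψ2 : ∀ w : Euc n, ψ2 w = F (w, 0) / (-c2) := by
    intro w
    rw [hψ2def]
    simp [hf1 w, smul_eq_mul]
    ring
  have hψ2le : ∀ w : Euc n, ψ2 w ≤ lam * G w := by
    intro w
    rw [hψ2 w, div_le_iff₀ (by linarith : (0:ℝ) < -c2)]
    have := hAineq w
    nlinarith
  have hψ2ge : ∀ w : Euc n, θ * fH w - G (-w) ≤ ψ2 w := by
    intro w
    rw [hψ2 w, le_div_iff₀ (by linarith : (0:ℝ) < -c2)]
    have := hBineq w
    nlinarith
  -- equality at v
  have hψ2v : ψ2 (q - p) = lam * b := by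
    have h1 := hψ2le (q - p)
    have h2 := hψ2ge (q - p)
    rw [hfv, neg_sub] at h2
    rw [← hbdef] at h1
    rw [← hadef] at h2
    have h3 : θ * c' = a + lam * b := by
      rw [hθc]
      have := hΦv
      simp only [hΦdef] at this
      rw [neg_sub, ← hadef, ← hbdef] at this
      linarith
    linarith
  -- construct the supporting functionals
  set ψ1 : Euc n →ₗ[ℝ] ℝ := θ • fH - ψ2 with hψ1def
  have hψ1 : ∀ w : Euc n, ψ1 w = θ * fH w - ψ2 w := by
    intro w; rw [hψ1def]; simp [smul_eq_mul]
  have hψ1le : ∀ w : Euc n, ψ1 w ≤ G (-w) := by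
    intro w; rw [hψ1 w]; have := hψ2ge w; linarith
  have hψ1v : ψ1 (q - p) = a := by
    rw [hψ1 (q - p), hfv, hψ2v]
    have h3 : θ * c' = a + lam * b := by
      rw [hθc]
      have := hΦv
      simp only [hΦdef] at this
      rw [neg_sub, ← hadef, ← hbdef] at this
      linarith
    linarith
  refine ⟨-ψ1, 1 - ψ1 p, ψ2, lam + ψ2 p, ?_, ?_, ?_, ?_, ?_, ?_, ?_⟩
  · -- fξ ≠ 0
    intro h0
    have := congrArg (fun f : Euc n →ₗ[ℝ] ℝ => f (q - p)) h0
    simp only [LinearMap.neg_apply, LinearMap.zero_apply, neg_eq_zero] at this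
    rw [hψ1v] at this
    linarith
  · -- fη ≠ 0
    intro h0
    have := congrArg (fun f : Euc n →ₗ[ℝ] ℝ => f (q - p)) h0
    simp only [LinearMap.zero_apply] at this
    rw [hψ2v] at this
    nlinarith
  · -- fξ x = cξ
    rw [hsinfT]
    simp only [LinearMap.neg_apply, map_add, LinearMap.map_smul, smul_eq_mul]
    rw [hψ1v]
    field_simp
    ring
  · -- fξ supporting
    intro z hz
    simp only [LinearMap.neg_apply]
    have h1 : ψ1 (p - z) ≤ G (-(p - z)) := hψ1le (p - z)
    rw [neg_sub] at h1
    have h2 : G (z - p) < 1 := hGlt1 hz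
    have h3 : ψ1 (p - z) = ψ1 p - ψ1 z := by rw [map_sub]
    linarith
  · -- fη y = cη
    rw [hssupT]
    simp only [map_add, LinearMap.map_smul, smul_eq_mul]
    rw [hψ2v]
    field_simp
    ring
  · -- fη supporting
    intro z hz
    have h1 : ψ2 (z - p) ≤ lam * G (z - p) := hψ2le (z - p)
    have h2 : G (z - p) < 1 := hGlt1 hz
    have h3 : ψ2 (z - p) = ψ2 z - ψ2 p := by rw [map_sub]
    have h4 : lam * G (z - p) < lam * 1 := mul_lt_mul_of_pos_left h2 (by linarith)
    rw [mul_one] at h4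
    linarith
  · -- linear dependence
    refine ⟨![1, -1, θ], ?_, ?_, ?_⟩
    · show (1 : ℝ) • (-ψ1) + (-1 : ℝ) • ψ2 + θ • fH = 0
      rw [hψ1def]
      ext z
      simp [smul_eq_mul]
      ring
    · show (1 : ℝ) * (1 - ψ1 p) + (-1 : ℝ) * (lam + ψ2 p) + θ * cH = 0
      have h1 : ψ1 p = θ * fH p - ψ2 p := hψ1 p
      have h2 : θ * cH = θ * fH p + θ * c' := by rw [hc'def]; ring
      rw [h1, h2, hθc]
      ring
    · intro ⟨h0, _, _⟩
      simp at h0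

end
end HP

open Filter MeasureTheory Metric Set in
/-- **Metric projection onto a hyperplane in a Hilbert geometry.** Let `H = {x | f_H x = c_H}`
be a hyperplane meeting `Ω`, `p ∈ Ω` and `q ∈ H ∩ Ω` with `q ≠ p`. Then `q` realises the
distance from `p` to `H ∩ Ω` if and only if `Ω` admits supporting hyperplanes `ξ`, `η` at the
two points `x`, `y` where the line `(pq)` meets `∂Ω`, such that `ξ`, `η` and `H` belong to a
common pencil, i.e. their projective closures contain a common `(n−2)`-dimensional projective
subspace. For hyperplanes `{fξ = cξ}`, `{fη = cη}`, `{f_H = c_H}` this pencil condition is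
exactly the linear dependence of the three pairs `(fξ,cξ)`, `(fη,cη)`, `(f_H,c_H)` (a common
direction, i.e. concurrence at infinity, being the parallel case). -/
theorem metric_projection_characterisation (n : ℕ) (hn : 2 ≤ n) (Ω : Set (Euc n))
    (hΩopen : IsOpen Ω) (hΩconv : Convex ℝ Ω) (hΩbdd : Bornology.IsBounded Ω)
    (p : Euc n) (hp : p ∈ Ω)
    (fH : Euc n →ₗ[ℝ] ℝ) (cH : ℝ) (hfH : fH ≠ 0)
    (q : Euc n) (hq : q ∈ Ω) (hqH : fH q = cH) (hpq : q ≠ p) :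
    (hilbertDist Ω p q =
        sInf (hilbertDist Ω p '' ({x : Euc n | fH x = cH} ∩ Ω))) ↔
      ∃ (fξ : Euc n →ₗ[ℝ] ℝ) (cξ : ℝ) (fη : Euc n →ₗ[ℝ] ℝ) (cη : ℝ),
        fξ ≠ 0 ∧ fη ≠ 0 ∧
        fξ (p + sInf (lineParams Ω p q) • (q - p)) = cξ ∧
        (∀ z ∈ Ω, fξ z ≤ cξ) ∧
        fη (p + sSup (lineParams Ω p q) • (q - p)) = cη ∧
        (∀ z ∈ Ω, fη z ≤ cη) ∧
        ¬ LinearIndependent ℝ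
          (![(fξ, cξ), (fη, cη), (fH, cH)] : Fin 3 → (Euc n →ₗ[ℝ] ℝ) × ℝ) := by
  have hsum_eq : ∀ (fξ : Euc n →ₗ[ℝ] ℝ) (cξ : ℝ) (fη : Euc n →ₗ[ℝ] ℝ) (cη : ℝ) (g : Fin 3 → ℝ),
      (∑ i, g i • (![(fξ, cξ), (fη, cη), (fH, cH)] : Fin 3 → (Euc n →ₗ[ℝ] ℝ) × ℝ) i)
        = (g 0 • fξ + g 1 • fη + g 2 • fH, g 0 * cξ + g 1 * cη + g 2 * cH) := by
    intro fξ cξ fη cη g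
    rw [Fin.sum_univ_three]
    simp only [Matrix.cons_val_zero, Matrix.cons_val_one, Matrix.head_cons,
      Matrix.cons_val_two, Matrix.tail_cons, Prod.smul_mk, Prod.mk_add_mk, smul_eq_mul]
  constructor
  · intro hmin
    obtain ⟨fξ, cξ, fη, cη, h1, h2, h3, h4, h5, h6, g, hg1, hg2, hg3⟩ :=
      HP.forward_dir hΩopen hΩconv hΩbdd hp hq hpq fH cH hfH hqH hmin
    refine ⟨fξ, cξ, fη, cη, h1, h2, h3, h4, h5, h6, ?_⟩
    rw [Fintype.not_linearIndependent_iff]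
    obtain ⟨i, hi⟩ : ∃ i : Fin 3, g i ≠ 0 := by
      by_contra hcon
      push_neg at hcon
      exact hg3 ⟨hcon 0, hcon 1, hcon 2⟩
    refine ⟨g, ?_, i, hi⟩
    rw [hsum_eq fξ cξ fη cη g, hg1, hg2]
    rfl
  · rintro ⟨fξ, cξ, fη, cη, h1, h2, h3, h4, h5, h6, hdep⟩
    rw [Fintype.not_linearIndependent_iff] at hdep
    obtain ⟨g, hsum, i, hi⟩ := hdep
    rw [hsum_eq fξ cξ fη cη g] at hsum
    have hg1 : g 0 • fξ + g 1 • fη + g 2 • fH = 0 := congrArg Prod.fst hsum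
    have hg2 : g 0 * cξ + g 1 * cη + g 2 * cH = 0 := congrArg Prod.snd hsum
    have hgne : ¬(g 0 = 0 ∧ g 1 = 0 ∧ g 2 = 0) := by
      rintro ⟨e0, e1, e2⟩
      fin_cases i <;> simp_all
    exact HP.reverse_dir hΩopen hΩconv hΩbdd hp hq hpq fH cH hfH hqH
      fξ cξ fη cη h1 h2 h3 h4 h5 h6 g hg1 hg2 hgne
end

section
/- Let Ω ⊂ ℝ² be a bounded open convex set with Hilbert metric d_Ω, let o ∈ Ω, R > 0, and let p and q be the two points where a line through o meets the metric sphere S_Ω(o,R) = {x ∈ Ω : d_Ω(o,x) = R}. Let C be one of the two arcs of S_Ω(o,R) from p to q, and let p' ∈ Ω be a point on the ray from o through p. Then the function x ↦ d_Ω(p',x) is monotonic along C: if p, x, y, q occur in this order along C, then d_Ω(p',x) ≤ d_Ω(p',y). -/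
open Filter MeasureTheory Metric Set

open Filter MeasureTheory Metric Set

section HD

variable {Ω : Set (Euc 2)}

private lemma seg_mem (hΩconv : Convex ℝ Ω) {P Q : Euc 2} (hP : P ∈ Ω) (hQ : Q ∈ Ω)
    {t : ℝ} (h0 : 0 ≤ t) (h1 : t ≤ 1) : P + t • (Q - P) ∈ Ω := by
  have h := hΩconv hP hQ (by linarith : (0:ℝ) ≤ 1 - t) h0 (by ring)
  convert h using 1
  module

private lemma exists_Ioo (hΩopen : IsOpen Ω) (hΩconv : Convex ℝ Ω)
    (hΩbdd : Bornology.IsBounded Ω) {z v : Euc 2} (hz : z ∈ Ω) (hv : v ≠ 0) :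
    ∃ a b : ℝ, a < 0 ∧ 0 < b ∧ {t : ℝ | z + t • v ∈ Ω} = Set.Ioo a b := by
  set S := {t : ℝ | z + t • v ∈ Ω} with hS
  have hcont : Continuous fun t : ℝ => z + t • v :=
    continuous_const.add (continuous_id.smul continuous_const)
  have hSopen : IsOpen S := hΩopen.preimage hcont
  have h0S : (0:ℝ) ∈ S := by simp [hS, hz]
  have hconv : Convex ℝ S := by
    intro t1 ht1 t2 ht2 α β hα hβ hαβ
    have hkey : z + (α * t1 + β * t2) • v = α • (z + t1 • v) + β • (z + t2 • v) := by
      have hz' : α • z + β • z = z := by rw [← add_smul, hαβ, one_smul]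
      rw [smul_add, smul_add, add_add_add_comm, hz', add_smul, smul_smul, smul_smul]
    show z + (α • t1 + β • t2) • v ∈ Ω
    rw [smul_eq_mul, smul_eq_mul, hkey]
    exact hΩconv ht1 ht2 hα hβ hαβ
  obtain ⟨M, hM⟩ := hΩbdd.exists_norm_le
  have hvpos : 0 < ‖v‖ := norm_pos_iff.2 hv
  have habs : ∀ t ∈ S, |t| ≤ (M + ‖z‖) / ‖v‖ := by
    intro t ht
    have h1 : ‖z + t • v‖ ≤ M := hM _ ht
    have h2 : ‖t • v‖ ≤ M + ‖z‖ := by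
      calc ‖t • v‖ = ‖(z + t • v) - z‖ := by rw [add_sub_cancel_left]
        _ ≤ ‖z + t • v‖ + ‖z‖ := norm_sub_le _ _
        _ ≤ M + ‖z‖ := by linarith
    rw [norm_smul, Real.norm_eq_abs] at h2
    rw [le_div_iff₀ hvpos]
    exact h2
  have hbddA : BddAbove S := ⟨(M + ‖z‖) / ‖v‖, fun t ht => (le_abs_self t).trans (habs t ht)⟩
  have hbddB : BddBelow S := ⟨-((M + ‖z‖) / ‖v‖), fun t ht => by
    have h1 := habs t ht; have h2 := neg_abs_le t; linarith⟩
  refine ⟨sInf S, sSup S, ?_, ?_, ?_⟩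
  · obtain ⟨ε, hε, hball⟩ := Metric.isOpen_iff.1 hSopen 0 h0S
    have hmem : -(ε/2) ∈ S := hball (by
      rw [Metric.mem_ball, Real.dist_eq, show -(ε/2) - 0 = -(ε/2) by ring, abs_neg,
        abs_of_pos (by linarith)]; linarith)
    calc sInf S ≤ -(ε/2) := csInf_le hbddB hmem
      _ < 0 := by linarith
  · obtain ⟨ε, hε, hball⟩ := Metric.isOpen_iff.1 hSopen 0 h0S
    have hmem : ε/2 ∈ S := hball (by
      rw [Metric.mem_ball, Real.dist_eq, show ε/2 - 0 = ε/2 by ring,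
        abs_of_pos (by linarith)]; linarith)
    calc (0:ℝ) < ε/2 := by linarith
      _ ≤ sSup S := le_csSup hbddA hmem
  · apply Set.Subset.antisymm
    · intro t ht
      obtain ⟨ε, hε, hball⟩ := Metric.isOpen_iff.1 hSopen t ht
      have hm1 : t - ε/2 ∈ S := hball (by
        rw [Metric.mem_ball, Real.dist_eq, show t - ε/2 - t = -(ε/2) by ring, abs_neg,
          abs_of_pos (by linarith)]; linarith)
      have hm2 : t + ε/2 ∈ S := hball (by
        rw [Metric.mem_ball, Real.dist_eq, show t + ε/2 - t = ε/2 by ring,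
          abs_of_pos (by linarith)]; linarith)
      refine ⟨lt_of_le_of_lt (csInf_le hbddB hm1) (by linarith), lt_of_lt_of_le (by linarith) (le_csSup hbddA hm2)⟩
    · intro t ht
      obtain ⟨t1, ht1S, ht1⟩ := exists_lt_of_csInf_lt ⟨0, h0S⟩ ht.1
      obtain ⟨t2, ht2S, ht2⟩ := exists_lt_of_lt_csSup ⟨0, h0S⟩ ht.2
      exact hconv.ordConnected.out ht1S ht2S ⟨ht1.le, ht2.le⟩

private lemma lineParams_eq {z v : Euc 2} {a b s t : ℝ}
    (hI : {r : ℝ | z + r • v ∈ Ω} = Set.Ioo a b) (hst : s < t) :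
    lineParams Ω (z + s • v) (z + t • v) = Set.Ioo ((a - s)/(t - s)) ((b - s)/(t - s)) := by
  have hts : (0:ℝ) < t - s := sub_pos.2 hst
  ext r
  have key : (z + s • v) + r • ((z + t • v) - (z + s • v)) = z + (s + r * (t - s)) • v := by
    module
  have h1 : (s + r * (t - s)) ∈ Set.Ioo a b ↔ (z + (s + r * (t - s)) • v ∈ Ω) := by
    rw [← hI]; rfl
  simp only [lineParams, Set.mem_setOf_eq, key, ← h1, Set.mem_Ioo]
  constructor
  · rintro ⟨hl, hr⟩
    constructor
    · rw [div_lt_iff₀ hts]; linarith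
    · rw [lt_div_iff₀ hts]; linarith
  · rintro ⟨hl, hr⟩
    rw [div_lt_iff₀ hts] at hl
    rw [lt_div_iff₀ hts] at hr
    constructor <;> linarith

private lemma lineParams_eq' {z v : Euc 2} {a b s t : ℝ}
    (hI : {r : ℝ | z + r • v ∈ Ω} = Set.Ioo a b) (hst : s < t) :
    lineParams Ω (z + t • v) (z + s • v) = Set.Ioo ((b - t)/(s - t)) ((a - t)/(s - t)) := by
  have hts : s - t < 0 := sub_neg.2 hst
  ext r
  have key : (z + t • v) + r • ((z + s • v) - (z + t • v)) = z + (t + r * (s - t)) • v := by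
    module
  have h1 : (t + r * (s - t)) ∈ Set.Ioo a b ↔ (z + (t + r * (s - t)) • v ∈ Ω) := by
    rw [← hI]; rfl
  simp only [lineParams, Set.mem_setOf_eq, key, ← h1, Set.mem_Ioo]
  constructor
  · rintro ⟨hl, hr⟩
    constructor
    · rw [div_lt_iff_of_neg hts]; linarith
    · rw [lt_div_iff_of_neg hts]; linarith
  · rintro ⟨hl, hr⟩
    rw [div_lt_iff_of_neg hts] at hl
    rw [lt_div_iff_of_neg hts] at hr
    constructor <;> linarith

private lemma ne_of_params {z v : Euc 2} {s t : ℝ} (hv : v ≠ 0) (hst : s < t) :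
    z + s • v ≠ z + t • v := by
  intro h
  have h2 : s • v = t • v := add_left_cancel h
  have h3 : (s - t) • v = 0 := by rw [sub_smul, h2, sub_self]
  rcases smul_eq_zero.1 h3 with h4 | h4
  · exact absurd (sub_eq_zero.1 h4) (ne_of_lt hst)
  · exact hv h4

private lemma hilbertDist_master {z v : Euc 2} {a b s t : ℝ} (hv : v ≠ 0)
    (hI : {r : ℝ | z + r • v ∈ Ω} = Set.Ioo a b)
    (hs : s ∈ Set.Ioo a b) (ht : t ∈ Set.Ioo a b) (hst : s < t) :
    hilbertDist Ω (z + s • v) (z + t • v)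
      = (1/2) * Real.log (((t - a) * (b - s)) / ((s - a) * (b - t))) := by
  have hts : (0:ℝ) < t - s := sub_pos.2 hst
  have hsa : (0:ℝ) < s - a := sub_pos.2 hs.1
  have hbt : (0:ℝ) < b - t := sub_pos.2 ht.2
  have hAB : (a - s)/(t - s) < (b - s)/(t - s) := by
    apply div_lt_div_of_pos_right ?_ hts
    linarith [hs.1, ht.2, hst]
  rw [hilbertDist, if_neg (ne_of_params hv hst), lineParams_eq hI hst,
    csInf_Ioo hAB, csSup_Ioo hAB]
  congr 1
  have h1 : t - s ≠ 0 := by linarith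
  have h2 : s - a ≠ 0 := by linarith
  have h3 : b - t ≠ 0 := by linarith
  have h4 : -((a - s)/(t - s)) = (s - a)/(t - s) := by field_simp; ring
  have h5 : (b - s)/(t - s) - 1 = (b - t)/(t - s) := by field_simp; ring
  have h6 : (1:ℝ) - (a - s)/(t - s) = (t - a)/(t - s) := by field_simp; ring
  rw [h4, h5, h6, div_div_div_cancel_right₀ h1, div_div_div_cancel_right₀ h1,
    div_mul_div_comm]

private lemma hilbertDist_master' {z v : Euc 2} {a b s t : ℝ} (hv : v ≠ 0)
    (hI : {r : ℝ | z + r • v ∈ Ω} = Set.Ioo a b)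
    (hs : s ∈ Set.Ioo a b) (ht : t ∈ Set.Ioo a b) (hst : s < t) :
    hilbertDist Ω (z + t • v) (z + s • v)
      = (1/2) * Real.log (((t - a) * (b - s)) / ((s - a) * (b - t))) := by
  have hts : s - t < 0 := sub_neg.2 hst
  have hsa : (0:ℝ) < s - a := sub_pos.2 hs.1
  have hbt : (0:ℝ) < b - t := sub_pos.2 ht.2
  have hAB : (b - t)/(s - t) < (a - t)/(s - t) :=
    div_lt_div_of_neg_of_lt hts (by linarith [hs.1, ht.2, hst])
  rw [hilbertDist, if_neg (ne_of_params hv hst).symm, lineParams_eq' hI hst,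
    csInf_Ioo hAB, csSup_Ioo hAB]
  congr 1
  have h1 : s - t ≠ 0 := by linarith
  have h4 : -((b - t)/(s - t)) = (b - t)/(t - s) := by
    rw [← neg_div, div_eq_div_iff h1 (by linarith : t - s ≠ 0)]; ring
  have h5 : (a - t)/(s - t) - 1 = (s - a)/(t - s) := by
    rw [div_sub_one h1]; rw [div_eq_div_iff h1 (by linarith : t - s ≠ 0)]; ring
  have h6 : (1:ℝ) - (b - t)/(s - t) = (b - s)/(t - s) := by
    rw [sub_div' h1]; rw [div_eq_div_iff h1 (by linarith : t - s ≠ 0)]; ring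
  have h7 : (a - t)/(s - t) = (t - a)/(t - s) := by
    rw [div_eq_div_iff h1 (by linarith : t - s ≠ 0)]; ring
  rw [h4, h5, h6, h7, div_div_div_cancel_right₀ (by linarith : t - s ≠ 0),
    div_div_div_cancel_right₀ (by linarith : t - s ≠ 0), div_mul_div_comm]
  rw [mul_comm (t-a) (b-s), mul_comm (s-a) (b-t)]

private lemma hilbertDist_self' (Ω : Set (Euc 2)) (p : Euc 2) : hilbertDist Ω p p = 0 := by
  simp [hilbertDist]

private lemma chord (hΩopen : IsOpen Ω) (hΩconv : Convex ℝ Ω)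
    (hΩbdd : Bornology.IsBounded Ω) {p q : Euc 2} (hp : p ∈ Ω) (hq : q ∈ Ω) (hpq : p ≠ q) :
    ∃ a b : ℝ, a < 0 ∧ 1 < b ∧ {r : ℝ | p + r • (q - p) ∈ Ω} = Set.Ioo a b := by
  obtain ⟨a, b, ha, hb, hI⟩ := exists_Ioo hΩopen hΩconv hΩbdd hp
    (sub_ne_zero.2 (Ne.symm hpq))
  refine ⟨a, b, ha, ?_, hI⟩
  have h1 : (1:ℝ) ∈ {r : ℝ | p + r • (q - p) ∈ Ω} := by
    simp only [Set.mem_setOf_eq, one_smul, add_sub_cancel]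
    exact hq
  rw [hI] at h1
  exact h1.2

private lemma endpoint_eqs (p q : Euc 2) :
    p + (0:ℝ) • (q - p) = p ∧ p + (1:ℝ) • (q - p) = q := by
  constructor
  · simp
  · simp

private lemma exp_two_dist {p q : Euc 2} {a b : ℝ}
    (hI : {r : ℝ | p + r • (q - p) ∈ Ω} = Set.Ioo a b) (hpq : p ≠ q)
    (ha : a < 0) (hb : 1 < b) :
    Real.exp (2 * hilbertDist Ω p q) = ((1 - a) * b) / ((-a) * (b - 1)) := by
  have hv : q - p ≠ 0 := sub_ne_zero.2 (Ne.symm hpq)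
  have h0 : (0:ℝ) ∈ Set.Ioo a b := ⟨ha, by linarith⟩
  have h1 : (1:ℝ) ∈ Set.Ioo a b := ⟨by linarith, hb⟩
  have hm := hilbertDist_master hv hI h0 h1 one_pos
  rw [(endpoint_eqs p q).1, (endpoint_eqs p q).2] at hm
  rw [hm]
  have hW : (0:ℝ) < ((1 - a) * (b - 0)) / ((0 - a) * (b - 1)) := by
    apply div_pos <;> nlinarith
  rw [show 2 * ((1/2) * Real.log (((1 - a) * (b - 0)) / ((0 - a) * (b - 1))))
      = Real.log (((1 - a) * (b - 0)) / ((0 - a) * (b - 1))) by ring]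
  rw [Real.exp_log hW]
  norm_num

private lemma hilbertDist_nonneg' (hΩopen : IsOpen Ω) (hΩconv : Convex ℝ Ω)
    (hΩbdd : Bornology.IsBounded Ω) {p q : Euc 2} (hp : p ∈ Ω) (hq : q ∈ Ω) :
    0 ≤ hilbertDist Ω p q := by
  by_cases hpq : p = q
  · rw [hpq, hilbertDist_self']
  obtain ⟨a, b, ha, hb, hI⟩ := chord hΩopen hΩconv hΩbdd hp hq hpq
  have hv : q - p ≠ 0 := sub_ne_zero.2 (Ne.symm hpq)
  have hm := hilbertDist_master hv hI ⟨ha, by linarith⟩ ⟨by linarith, hb⟩ one_pos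
  rw [(endpoint_eqs p q).1, (endpoint_eqs p q).2] at hm
  rw [hm]
  have hlog : 0 ≤ Real.log (((1 - a) * (b - 0)) / ((0 - a) * (b - 1))) := by
    apply Real.log_nonneg
    rw [le_div_iff₀ (by nlinarith)]
    nlinarith
  linarith

private lemma hilbertDist_symm' (hΩopen : IsOpen Ω) (hΩconv : Convex ℝ Ω)
    (hΩbdd : Bornology.IsBounded Ω) {p q : Euc 2} (hp : p ∈ Ω) (hq : q ∈ Ω) :
    hilbertDist Ω p q = hilbertDist Ω q p := by
  by_cases hpq : p = q
  · rw [hpq]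
  obtain ⟨a, b, ha, hb, hI⟩ := chord hΩopen hΩconv hΩbdd hp hq hpq
  have hv : q - p ≠ 0 := sub_ne_zero.2 (Ne.symm hpq)
  have hm := hilbertDist_master hv hI ⟨ha, by linarith⟩ ⟨by linarith, hb⟩ one_pos
  have hm' := hilbertDist_master' hv hI ⟨ha, by linarith⟩ ⟨by linarith, hb⟩ one_pos
  rw [(endpoint_eqs p q).1, (endpoint_eqs p q).2] at hm hm'
  rw [hm, hm']

private lemma hilbertDist_add' (hΩopen : IsOpen Ω) (hΩconv : Convex ℝ Ω)
    (hΩbdd : Bornology.IsBounded Ω) {P Q : Euc 2} (hP : P ∈ Ω) (hQ : Q ∈ Ω)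
    {c : ℝ} (h0 : 0 ≤ c) (h1 : c ≤ 1) :
    hilbertDist Ω P Q
      = hilbertDist Ω P (P + c • (Q - P)) + hilbertDist Ω (P + c • (Q - P)) Q := by
  by_cases hPQ : P = Q
  · rw [hPQ]; simp [hilbertDist_self']
  rcases eq_or_lt_of_le h0 with hc0 | hc0
  · rw [← hc0]; simp [hilbertDist_self']
  rcases eq_or_lt_of_le h1 with hc1 | hc1
  · rw [hc1]; simp [hilbertDist_self']
  obtain ⟨a, b, ha, hb, hI⟩ := chord hΩopen hΩconv hΩbdd hP hQ hPQ
  have hv : Q - P ≠ 0 := sub_ne_zero.2 (Ne.symm hPQ)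
  have hmem0 : (0:ℝ) ∈ Set.Ioo a b := ⟨ha, by linarith⟩
  have hmem1 : (1:ℝ) ∈ Set.Ioo a b := ⟨by linarith, hb⟩
  have hmemc : c ∈ Set.Ioo a b := ⟨by linarith, by linarith⟩
  have hmPQ := hilbertDist_master hv hI hmem0 hmem1 one_pos
  have hmPM := hilbertDist_master hv hI hmem0 hmemc hc0
  have hmMQ := hilbertDist_master hv hI hmemc hmem1 hc1
  simp only [(endpoint_eqs P Q).1, (endpoint_eqs P Q).2] at hmPQ hmPM hmMQ
  rw [hmPQ, hmPM, hmMQ]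
  have hY : (0:ℝ) < ((c - a) * (b - 0)) / ((0 - a) * (b - c)) := by
    apply div_pos <;> nlinarith
  have hZ : (0:ℝ) < ((1 - a) * (b - c)) / ((c - a) * (b - 1)) := by
    apply div_pos <;> nlinarith
  rw [show (1/2) * Real.log (((c - a) * (b - 0)) / ((0 - a) * (b - c)))
      + (1/2) * Real.log (((1 - a) * (b - c)) / ((c - a) * (b - 1)))
      = (1/2) * Real.log ((((c - a) * (b - 0)) / ((0 - a) * (b - c)))
          * (((1 - a) * (b - c)) / ((c - a) * (b - 1))))
    from by rw [Real.log_mul hY.ne' hZ.ne']; ring]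
  congr 1
  congr 1
  rw [div_mul_div_comm]
  rw [div_eq_div_iff (ne_of_gt (mul_pos (by linarith : (0:ℝ) < 0 - a) (by linarith : (0:ℝ) < b - 1)))
    (ne_of_gt (mul_pos (mul_pos (by linarith : (0:ℝ) < 0 - a) (by linarith : (0:ℝ) < b - c))
      (mul_pos (by linarith : (0:ℝ) < c - a) (by linarith : (0:ℝ) < b - 1))))]
  ring

private lemma L1 {p q : Euc 2} {a b : ℝ} (hp : p ∈ Ω) (hq : q ∈ Ω) (hpq : p ≠ q)
    (hI : {r : ℝ | p + r • (q - p) ∈ Ω} = Set.Ioo a b) (ha : a < 0) (hb : 1 < b)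
    (f g : Euc 2 →L[ℝ] ℝ) (cf cg : ℝ)
    (hf : ∀ z ∈ Ω, 0 < cf + f z) (hg : ∀ z ∈ Ω, 0 < cg + g z) :
    (cf + f q) * (cg + g p) ≤ Real.exp (2 * hilbertDist Ω p q) * ((cf + f p) * (cg + g q)) := by
  have hab : a < b := by linarith
  set c0 := cf + f p with hc0def
  set c1 := cf + f q with hc1def
  set d0 := cg + g p with hd0def
  set d1 := cg + g q with hd1def
  have hc0 : 0 < c0 := hf p hp
  have hc1 : 0 < c1 := hf q hq
  have hd0 : 0 < d0 := hg p hp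
  have hd1 : 0 < d1 := hg q hq
  have hmem : ∀ t ∈ Set.Ioo a b, p + t • (q - p) ∈ Ω := by
    intro t ht; rw [show (p + t • (q - p) ∈ Ω) = (t ∈ {r : ℝ | p + r • (q - p) ∈ Ω}) from rfl, hI]
    exact ht
  have hevalf : ∀ t : ℝ, cf + f (p + t • (q - p)) = c0 + t * (c1 - c0) := by
    intro t
    rw [hc0def, hc1def, map_add, _root_.map_smul, _root_.map_sub]
    simp only [smul_eq_mul]
    ring
  have hevalg : ∀ t : ℝ, cg + g (p + t • (q - p)) = d0 + t * (d1 - d0) := by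
    intro t
    rw [hd0def, hd1def, map_add, _root_.map_smul, _root_.map_sub]
    simp only [smul_eq_mul]
    ring
  have key1 : 0 ≤ c0 + a * (c1 - c0) := by
    have hten : Tendsto (fun t : ℝ => c0 + t * (c1 - c0)) (nhdsWithin a (Set.Ioi a))
        (nhds (c0 + a * (c1 - c0))) :=
      ((continuous_const.add (continuous_id.mul continuous_const)).tendsto a).mono_left
        nhdsWithin_le_nhds
    refine ge_of_tendsto hten ?_
    filter_upwards [Ioo_mem_nhdsGT_of_mem ⟨le_refl a, hab⟩] with t ht
    rw [← hevalf t]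
    exact (hf _ (hmem t ht)).le
  have key2 : 0 ≤ d0 + b * (d1 - d0) := by
    have hten : Tendsto (fun t : ℝ => d0 + t * (d1 - d0)) (nhdsWithin b (Set.Iio b))
        (nhds (d0 + b * (d1 - d0))) :=
      ((continuous_const.add (continuous_id.mul continuous_const)).tendsto b).mono_left
        nhdsWithin_le_nhds
    refine ge_of_tendsto hten ?_
    filter_upwards [Ioo_mem_nhdsLT_of_mem ⟨hab, le_refl b⟩] with t ht
    rw [← hevalg t]
    exact (hg _ (hmem t ht)).le
  rw [exp_two_dist hI hpq ha hb]
  have hden : (0:ℝ) < (-a) * (b - 1) := mul_pos (by linarith) (by linarith)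
  rw [div_mul_eq_mul_div, le_div_iff₀ hden]
  have i1 : (-a) * c1 ≤ (1 - a) * c0 := by nlinarith [key1]
  have i2 : (b - 1) * d0 ≤ b * d1 := by nlinarith [key2]
  have h3 := mul_le_mul i1 i2 (mul_nonneg (by linarith) hd0.le)
    (mul_nonneg (by linarith) hc0.le)
  nlinarith [h3]

private lemma L2 (hΩopen : IsOpen Ω) (hΩconv : Convex ℝ Ω) {p q : Euc 2} {a b : ℝ}
    (hp : p ∈ Ω) (hq : q ∈ Ω) (hpq : p ≠ q)
    (hI : {r : ℝ | p + r • (q - p) ∈ Ω} = Set.Ioo a b) (ha : a < 0) (hb : 1 < b) :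
    ∃ (f g : Euc 2 →L[ℝ] ℝ) (cf cg : ℝ),
      (∀ z ∈ Ω, 0 < cf + f z) ∧ (∀ z ∈ Ω, 0 < cg + g z) ∧
      Real.exp (2 * hilbertDist Ω p q) * ((cf + f p) * (cg + g q))
        = (cf + f q) * (cg + g p) := by
  have hab : a < b := by linarith
  have hmem : ∀ t ∈ Set.Ioo a b, p + t • (q - p) ∈ Ω := by
    intro t ht; rw [show (p + t • (q - p) ∈ Ω) = (t ∈ {r : ℝ | p + r • (q - p) ∈ Ω}) from rfl, hI]
    exact ht
  have hcontline : Continuous fun t : ℝ => p + t • (q - p) :=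
    continuous_const.add (continuous_id.smul continuous_const)
  -- A, the boundary point at parameter a
  set A := p + a • (q - p) with hAdef
  have hAclos : A ∈ closure Ω := by
    refine mem_closure_of_tendsto ((hcontline.tendsto a).mono_left
      (nhdsWithin_le_nhds (s := Set.Ioi a))) ?_
    filter_upwards [Ioo_mem_nhdsGT_of_mem ⟨le_refl a, hab⟩] with t ht
    exact hmem t ht
  have hAnot : A ∉ Ω := by
    intro h
    have : a ∈ Set.Ioo a b := by rw [← hI]; exact h
    exact lt_irrefl a this.1
  obtain ⟨f0, hf0⟩ := geometric_hahn_banach_open_point hΩconv hΩopen hAnot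
  -- B, the boundary point at parameter b
  set B := p + b • (q - p) with hBdef
  have hBclos : B ∈ closure Ω := by
    refine mem_closure_of_tendsto ((hcontline.tendsto b).mono_left
      (nhdsWithin_le_nhds (s := Set.Iio b))) ?_
    filter_upwards [Ioo_mem_nhdsLT_of_mem ⟨hab, le_refl b⟩] with t ht
    exact hmem t ht
  have hBnot : B ∉ Ω := by
    intro h
    have : b ∈ Set.Ioo a b := by rw [← hI]; exact h
    exact lt_irrefl b this.2
  obtain ⟨g0, hg0⟩ := geometric_hahn_banach_open_point hΩconv hΩopen hBnot
  refine ⟨-f0, -g0, f0 A, g0 B, ?_, ?_, ?_⟩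
  · intro z hz
    have := hf0 z hz
    simp only [ContinuousLinearMap.neg_apply]
    linarith
  · intro z hz
    have := hg0 z hz
    simp only [ContinuousLinearMap.neg_apply]
    linarith
  · simp only [ContinuousLinearMap.neg_apply]
    have hfA : f0 A = f0 p + a * f0 (q - p) := by
      rw [hAdef, map_add, _root_.map_smul]; simp [smul_eq_mul]
    have hgB : g0 B = g0 p + b * g0 (q - p) := by
      rw [hBdef, map_add, _root_.map_smul]; simp [smul_eq_mul]
    have hfq : f0 q = f0 p + f0 (q - p) := by rw [_root_.map_sub]; ring
    have hgq : g0 q = g0 p + g0 (q - p) := by rw [_root_.map_sub]; ring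
    rw [exp_two_dist hI hpq ha hb]
    rw [hfq, hgq, hfA, hgB]
    have hane : a ≠ 0 := by linarith
    have hbne : b ≠ 0 := by linarith
    have hb1ne : b - 1 ≠ 0 := by linarith
    field_simp
    ring

private lemma hilbertDist_triangle' (hΩopen : IsOpen Ω) (hΩconv : Convex ℝ Ω)
    (hΩbdd : Bornology.IsBounded Ω) {p q r : Euc 2}
    (hp : p ∈ Ω) (hq : q ∈ Ω) (hr : r ∈ Ω) :
    hilbertDist Ω p r ≤ hilbertDist Ω p q + hilbertDist Ω q r := by
  by_cases hpq : p = q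
  · rw [hpq, hilbertDist_self']; linarith
  by_cases hqr : q = r
  · rw [← hqr, hilbertDist_self']; linarith
  by_cases hpr : p = r
  · rw [hpr, hilbertDist_self']
    have := hilbertDist_nonneg' hΩopen hΩconv hΩbdd hr hq
    have := hilbertDist_nonneg' hΩopen hΩconv hΩbdd hq hr
    rw [hpr] at *
    linarith
  obtain ⟨a, b, ha, hb, hI⟩ := chord hΩopen hΩconv hΩbdd hp hr hpr
  obtain ⟨f, g, cf, cg, hf, hg, heq⟩ := L2 hΩopen hΩconv hp hr hpr hI ha hb
  obtain ⟨a1, b1, ha1, hb1, hI1⟩ := chord hΩopen hΩconv hΩbdd hp hq hpq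
  obtain ⟨a2, b2, ha2, hb2, hI2⟩ := chord hΩopen hΩconv hΩbdd hq hr hqr
  have h1 := L1 hp hq hpq hI1 ha1 hb1 f g cf cg hf hg
  have h2 := L1 hq hr hqr hI2 ha2 hb2 f g cf cg hf hg
  set Epr := Real.exp (2 * hilbertDist Ω p r) with hEpr
  set Epq := Real.exp (2 * hilbertDist Ω p q) with hEpq
  set Eqr := Real.exp (2 * hilbertDist Ω q r) with hEqr
  set fp := cf + f p
  set fq := cf + f q
  set fr := cf + f r
  set gp := cg + g p
  set gq := cg + g q
  set gr := cg + g r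
  have hfp : 0 < fp := hf p hp
  have hfq : 0 < fq := hf q hq
  have hfr : 0 < fr := hf r hr
  have hgp : 0 < gp := hg p hp
  have hgq : 0 < gq := hg q hq
  have hgr : 0 < gr := hg r hr
  have hK : 0 < (fq * gq) * (fp * gr) := by positivity
  have hEK : Epr * ((fq * gq) * (fp * gr)) = (fq * gp) * (fr * gq) := by
    rw [show Epr * ((fq * gq) * (fp * gr)) = (Epr * (fp * gr)) * (fq * gq) from by ring, heq]
    ring
  have hm := mul_le_mul h1 h2 (mul_pos hfr hgq).le
    (mul_nonneg (Real.exp_pos _).le (mul_pos hfp hgq).le)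
  have hfinal : Epr ≤ Epq * Eqr := by
    apply le_of_mul_le_mul_right _ hK
    calc Epr * ((fq * gq) * (fp * gr)) = (fq * gp) * (fr * gq) := hEK
      _ ≤ (Epq * (fp * gq)) * (Eqr * (fq * gr)) := hm
      _ = (Epq * Eqr) * ((fq * gq) * (fp * gr)) := by ring
  have hexp : Epr ≤ Real.exp (2 * hilbertDist Ω p q + 2 * hilbertDist Ω q r) := by
    rw [Real.exp_add]; exact hfinal
  rw [hEpr] at hexp
  have := Real.exp_le_exp.1 hexp
  linarith

end HD


/-- The planar determinant (cross product) of two vectors of `ℝ²`. -/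
noncomputable def det2 (u v : Euc 2) : ℝ := u 0 * v 1 - u 1 * v 0

private lemma det2_smul_right (u v : Euc 2) (r : ℝ) : det2 u (r • v) = r * det2 u v := by
  simp only [det2, PiLp.smul_apply, smul_eq_mul]
  ring

private lemma det2_expand (u w z : Euc 2) (t : ℝ) :
    det2 u (w + t • z) = det2 u w + t * det2 u z := by
  simp only [det2, PiLp.add_apply, PiLp.smul_apply, smul_eq_mul]
  ring

private lemma det2_self (u : Euc 2) : det2 u u = 0 := by
  simp only [det2]; ring

private lemma det2_swap (u v : Euc 2) : det2 u v = -det2 v u := by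
  simp only [det2]; ring


/-- **Monotonicity of the distance to a point along a metric sphere** in a plane Hilbert
geometry. Let `p`, `q` be the two points where a line through `o` meets the sphere
`S_Ω(o,R)`, let `x`, `y` be points of the sphere lying on one of the two arcs `C` from `p`
to `q` (the side of the line `(pq)` containing them being fixed by `det2 (p-o) (·-o) > 0`)
with `p, x, y, q` in this order along `C` (encoded by `det2 (x-o) (y-o) ≥ 0`), and let `p'`
be a point of `Ω` on the ray from `o` through `p`. Then `d_Ω(p',x) ≤ d_Ω(p',y)`. -/
theorem sphere_dist_monotonic (Ω : Set (Euc 2))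
    (hΩopen : IsOpen Ω) (hΩconv : Convex ℝ Ω) (hΩbdd : Bornology.IsBounded Ω)
    (o : Euc 2) (ho : o ∈ Ω) (R : ℝ) (hR : 0 < R)
    (p q x y p' : Euc 2)
    (hp : p ∈ Ω) (hq : q ∈ Ω) (hx : x ∈ Ω) (hy : y ∈ Ω) (hp' : p' ∈ Ω)
    (hpS : hilbertDist Ω o p = R) (hqS : hilbertDist Ω o q = R)
    (hxS : hilbertDist Ω o x = R) (hyS : hilbertDist Ω o y = R)
    (hline : ∃ t : ℝ, t < 0 ∧ q - o = t • (p - o))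
    (hxside : 0 < det2 (p - o) (x - o)) (hyside : 0 < det2 (p - o) (y - o))
    (horder : 0 ≤ det2 (x - o) (y - o))
    (hray : ∃ s : ℝ, 0 ≤ s ∧ p' = o + s • (p - o)) :
    hilbertDist Ω p' x ≤ hilbertDist Ω p' y := by
  obtain ⟨s, hs0, hps⟩ := hray
  have hxo : x ≠ o := by
    rintro rfl
    rw [hilbertDist_self'] at hxS
    linarith
  -- the affine function t ↦ det2 (x-o) (p' + t•(y-p') - o) = A + t*B
  have hpo' : p' - o = s • (p - o) := by rw [hps]; abel
  set A := det2 (x - o) (p' - o) with hAdef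
  set B := det2 (x - o) (y - p') with hBdef
  have hA0 : A ≤ 0 := by
    rw [hAdef, hpo', det2_smul_right, det2_swap (x - o) (p - o)]
    have : 0 ≤ s * det2 (p - o) (x - o) := mul_nonneg hs0 hxside.le
    linarith [mul_nonneg hs0 hxside.le]
  have hAB : 0 ≤ A + B := by
    have h1 : p' + (y - p') - o = (y - o) := by abel
    have h2 : det2 (x - o) (y - o) = A + B := by
      rw [hAdef, hBdef, ← h1, show p' + (y - p') - o = (p' - o) + (1:ℝ) • (y - p') from by
        rw [one_smul]; abel, det2_expand, one_mul]
    linarith [horder, h2 ▸ horder]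
  -- choose c ∈ [0,1] with A + c*B = 0
  obtain ⟨c, hc0, hc1, hFc⟩ : ∃ c : ℝ, 0 ≤ c ∧ c ≤ 1 ∧ A + c * B = 0 := by
    by_cases hAz : A = 0
    · exact ⟨0, le_refl 0, zero_le_one, by rw [hAz]; ring⟩
    · have hAneg : A < 0 := lt_of_le_of_ne hA0 hAz
      have hBpos : 0 < B := by linarith
      refine ⟨-A / B, (div_pos (by linarith) hBpos).le, ?_, ?_⟩
      · rw [div_le_one hBpos]; linarith
      · field_simp; ring
  set w := p' + c • (y - p') with hwdef
  have hwΩ : w ∈ Ω := seg_mem hΩconv hp' hy hc0 hc1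
  have hwdet : det2 (x - o) (w - o) = 0 := by
    rw [hwdef, show p' + c • (y - p') - o = (p' - o) + c • (y - p') from by abel,
      det2_expand, ← hAdef, ← hBdef, hFc]
  -- w - o = τ • (x - o)
  obtain ⟨τ, hτ⟩ : ∃ τ : ℝ, w - o = τ • (x - o) := by
    have hxone : ¬((x - o) 0 = 0 ∧ (x - o) 1 = 0) := by
      rintro ⟨h0, h1⟩
      apply hxo
      have hxz : x - o = 0 := by
        ext i
        fin_cases i <;> simpa using (by assumption)
      rwa [sub_eq_zero] at hxz
    simp only [det2] at hwdet
    by_cases hu0 : (x - o) 0 = 0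
    · have hu1 : (x - o) 1 ≠ 0 := fun h => hxone ⟨hu0, h⟩
      have hz : (w - o) 0 = 0 := by
        have h2 : (x - o) 1 * (w - o) 0 = 0 := by
          rw [hu0] at hwdet; linarith
        rcases mul_eq_zero.1 h2 with h' | h'
        · exact absurd h' hu1
        · exact h'
      refine ⟨(w - o) 1 / (x - o) 1, ?_⟩
      ext i
      fin_cases i
      · show (w - o) 0 = ((w - o) 1 / (x - o) 1) * (x - o) 0
        rw [hu0, mul_zero, hz]
      · show (w - o) 1 = ((w - o) 1 / (x - o) 1) * (x - o) 1
        rw [div_mul_cancel₀ _ hu1]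
    · refine ⟨(w - o) 0 / (x - o) 0, ?_⟩
      ext i
      fin_cases i
      · show (w - o) 0 = ((w - o) 0 / (x - o) 0) * (x - o) 0
        rw [div_mul_cancel₀ _ hu0]
      · show (w - o) 1 = ((w - o) 0 / (x - o) 0) * (x - o) 1
        rw [div_mul_eq_mul_div, eq_div_iff hu0]
        linear_combination hwdet
  have hτ0 : 0 ≤ τ := by
    have h1 : det2 (p - o) (w - o) = τ * det2 (p - o) (x - o) := by
      rw [hτ, det2_smul_right]
    have h2 : det2 (p - o) (w - o) = c * det2 (p - o) (y - o) := by
      have hw2 : w - o = (y - o) + ((1 - c) * s) • (p - o) + (-(1 - c)) • (y - o) := by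
        rw [hwdef, hps]; module
      rw [hw2, det2_expand, det2_expand, det2_self, mul_zero, add_zero]
      ring
    have h3 : 0 ≤ τ * det2 (p - o) (x - o) := by
      rw [← h1, h2]
      exact mul_nonneg hc0 hyside.le
    by_contra hlt
    push_neg at hlt
    nlinarith [hxside]
  -- now the metric argument
  have hwo : w = o + τ • (x - o) := by rw [← hτ]; abel
  have e1 : hilbertDist Ω p' y = hilbertDist Ω p' w + hilbertDist Ω w y := by
    have := hilbertDist_add' hΩopen hΩconv hΩbdd hp' hy hc0 hc1
    rwa [← hwdef] at this
  have hdwx_le : hilbertDist Ω w x ≤ hilbertDist Ω w y := by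
    rcases le_total τ 1 with hτ1 | hτ1
    · -- w between o and x
      have hadd := hilbertDist_add' hΩopen hΩconv hΩbdd ho hx hτ0 hτ1
      rw [← hwo, hxS] at hadd
      -- R = d(o,w) + d(w,x)
      have htri := hilbertDist_triangle' hΩopen hΩconv hΩbdd ho hwΩ hy
      rw [hyS] at htri
      -- R ≤ d(o,w) + d(w,y)
      linarith
    · -- x between o and w
      have hτpos : 0 < τ := lt_of_lt_of_le one_pos hτ1
      have hinv0 : 0 ≤ 1/τ := by positivity
      have hinv1 : 1/τ ≤ 1 := by
        rw [div_le_one hτpos]; exact hτ1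
      have hxw : o + (1/τ) • (w - o) = x := by
        rw [hτ, smul_smul, one_div, inv_mul_cancel₀ (ne_of_gt hτpos), one_smul]
        abel
      have hadd := hilbertDist_add' hΩopen hΩconv hΩbdd ho hwΩ hinv0 hinv1
      rw [show o + (1/τ) • (w - o) = x from hxw, hxS] at hadd
      -- d(o,w) = R + d(x,w)
      have htri := hilbertDist_triangle' hΩopen hΩconv hΩbdd ho hy hwΩ
      rw [hyS] at htri
      -- d(o,w) ≤ R + d(y,w)
      have hsym1 : hilbertDist Ω w x = hilbertDist Ω x w :=
        hilbertDist_symm' hΩopen hΩconv hΩbdd hwΩ hx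
      have hsym2 : hilbertDist Ω w y = hilbertDist Ω y w :=
        hilbertDist_symm' hΩopen hΩconv hΩbdd hwΩ hy
      linarith
  have htri2 := hilbertDist_triangle' hΩopen hΩconv hΩbdd hp' hwΩ hx
  linarith
end
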